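/- Let $T$ be a compact rooted $\mathbb{R}$-tree and $m$ a decreasing, left-continuous, nonnegative function on $T$ with $m(x) \ge m(x^+)$ for all $x \in T$. Then there exists a unique Borel measure $\mu$ on $T$ such that $\mu(T_x) = m(x)$ for all $x \in T$. -/

import Mathlib

/-- `φ` is a distance-preserving parametrization of a segment from `x` to `y`. -/
def IsSegmentMap {T : Type*} [MetricSpace T] (x y : T)
    (φ : Set.Icc (0 : ℝ) (dist x y) → T) : Prop :=
  (∀ a b, dist (φ a) (φ b) = |a.1 - b.1|) ∧
    φ ⟨0, Set.mem_Icc.mpr ⟨le_rfl, dist_nonneg⟩⟩ = x ∧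
    φ ⟨dist x y, Set.mem_Icc.mpr ⟨dist_nonneg, le_rfl⟩⟩ = y

/-- A metric space is an `ℝ`-tree. -/
def IsRTree (T : Type*) [MetricSpace T] : Prop :=
  (∀ x y : T, ∃! φ : Set.Icc (0 : ℝ) (dist x y) → T, IsSegmentMap x y φ) ∧
  (∀ c : Set.Icc (0 : ℝ) 1 → T, Continuous c → Function.Injective c →
    ∀ φ, IsSegmentMap (c ⟨0, Set.mem_Icc.mpr ⟨le_rfl, zero_le_one⟩⟩)
        (c ⟨1, Set.mem_Icc.mpr ⟨zero_le_one, le_rfl⟩⟩) φ →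
      Set.range c = Set.range φ)

/-- The tree partial order rooted at `ρ`: `x ≤ y` iff `x` lies on the geodesic
segment from `ρ` to `y`. -/
def treeLE {T : Type*} [MetricSpace T] (ρ x y : T) : Prop :=
  dist ρ x + dist x y = dist ρ y

/-- The subtree `T_x = {w : x ≤ w}` above `x`. -/
def subtreeAt {T : Type*} [MetricSpace T] (ρ x : T) : Set T :=
  {w | treeLE ρ x w}

/-- The collection of pre-balls `B(x, C) = T_x \ ⋃_{y ∈ C} T_y`, where `C`
is a finite pre-cutset of `T_x` (all elements `≥ x`, pairwise incomparable). -/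
def preBalls {T : Type*} [MetricSpace T] (ρ : T) : Set (Set T) :=
  {B | ∃ (x : T) (C : Finset T),
    (∀ y ∈ C, treeLE ρ x y) ∧
    (∀ y ∈ C, ∀ z ∈ C, y ≠ z → ¬ treeLE ρ y z) ∧
    B = subtreeAt ρ x \ ⋃ y ∈ C, subtreeAt ρ y}

section Basics
variable {T : Type*} [MetricSpace T] {ρ x y z w : T}

lemma treeLE_refl (ρ x : T) : treeLE ρ x x := by simp [treeLE]

lemma treeLE_root (ρ x : T) : treeLE ρ ρ x := by simp [treeLE]

lemma treeLE.trans (h1 : treeLE ρ x y) (h2 : treeLE ρ y z) : treeLE ρ x z := by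
  unfold treeLE at *
  have t1 := dist_triangle ρ x z
  have t2 := dist_triangle x y z
  have t3 := dist_triangle x z y
  have := dist_comm z y
  nlinarith [dist_nonneg (x := x) (y := z)]

lemma treeLE.antisymm (h1 : treeLE ρ x y) (h2 : treeLE ρ y x) : x = y := by
  unfold treeLE at *
  have : dist x y = 0 := by
    have := dist_comm x y
    linarith
  exact dist_eq_zero.mp this

lemma treeLE.height_le (h : treeLE ρ x y) : dist ρ x ≤ dist ρ y := by
  unfold treeLE at h; have := dist_nonneg (x := x) (y := y); linarith

lemma treeLE.dist_eq (h : treeLE ρ x y) : dist x y = dist ρ y - dist ρ x := by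
  unfold treeLE at h; linarith

lemma treeLE.eq_of_height_le (h : treeLE ρ x y) (hh : dist ρ y ≤ dist ρ x) : x = y := by
  have : dist x y = 0 := by
    have h1 := h.dist_eq
    have h2 := dist_nonneg (x := x) (y := y)
    linarith
  exact dist_eq_zero.mp this

/-- betweenness splitting : if `x ≤ y` (root `ρ`) and `w` is between `x` and `y`,
then `x ≤ w ≤ y`. -/
lemma treeLE.between (h : treeLE ρ x y) (hw : dist x w + dist w y = dist x y) :
    treeLE ρ x w ∧ treeLE ρ w y := by
  unfold treeLE at *
  have t1 := dist_triangle ρ x w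
  have t2 := dist_triangle ρ w y
  constructor <;> nlinarith [dist_nonneg (x := ρ) (y := w)]

lemma subtreeAt_root : subtreeAt ρ ρ = Set.univ := by
  ext w; simp [subtreeAt, treeLE_root]

lemma mem_subtreeAt : w ∈ subtreeAt ρ x ↔ treeLE ρ x w := Iff.rfl

lemma subtreeAt_mono (h : treeLE ρ x y) : subtreeAt ρ y ⊆ subtreeAt ρ x :=
  fun _ hw => h.trans hw

end Basics

section Seg
variable {T : Type*} [MetricSpace T]

noncomputable def segMap (hT : IsRTree T) (x y : T) : Set.Icc (0:ℝ) (dist x y) → T :=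
  (hT.1 x y).exists.choose

lemma segMap_spec (hT : IsRTree T) (x y : T) : IsSegmentMap x y (segMap hT x y) :=
  (hT.1 x y).exists.choose_spec

lemma segMap_unique (hT : IsRTree T) {x y : T} {φ} (hφ : IsSegmentMap x y φ) :
    φ = segMap hT x y :=
  (hT.1 x y).unique hφ (segMap_spec hT x y)

variable {x y w : T} {φ : Set.Icc (0:ℝ) (dist x y) → T}

lemma IsSegmentMap.dist_left (hφ : IsSegmentMap x y φ) (a) : dist x (φ a) = a.1 := by
  have h := hφ.1 ⟨0, Set.mem_Icc.mpr ⟨le_rfl, dist_nonneg⟩⟩ a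
  rw [hφ.2.1] at h
  rw [h, zero_sub, abs_neg, abs_of_nonneg a.2.1]

lemma IsSegmentMap.dist_right (hφ : IsSegmentMap x y φ) (a) :
    dist (φ a) y = dist x y - a.1 := by
  have h := hφ.1 a ⟨dist x y, Set.mem_Icc.mpr ⟨dist_nonneg, le_rfl⟩⟩
  rw [hφ.2.2] at h
  rw [h, abs_of_nonpos (by linarith [a.2.2])]
  ring

lemma IsSegmentMap.treeLE_pt (hφ : IsSegmentMap x y φ) (a) : treeLE x (φ a) y := by
  unfold treeLE; rw [hφ.dist_left, hφ.dist_right]; ring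

lemma IsSegmentMap.continuous (hφ : IsSegmentMap x y φ) : Continuous φ := by
  refine LipschitzWith.continuous (K := 1) (LipschitzWith.of_dist_le_mul fun a b => ?_)
  rw [hφ.1, Subtype.dist_eq, Real.dist_eq, NNReal.coe_one, one_mul]

/-- Concatenation of segments. -/
lemma exists_concat {x w y : T} (hw : treeLE x w y)
    {φ1 : Set.Icc (0:ℝ) (dist x w) → T} {φ2 : Set.Icc (0:ℝ) (dist w y) → T}
    (h1 : IsSegmentMap x w φ1) (h2 : IsSegmentMap w y φ2) :
    ∃ ψ, IsSegmentMap x y ψ ∧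
      ∀ (t : Set.Icc (0:ℝ) (dist x y)) (ht : t.1 ≤ dist x w),
        ψ t = φ1 ⟨t.1, t.2.1, ht⟩ := by
  have hw' : dist x w + dist w y = dist x y := hw
  have hbr : ∀ t : Set.Icc (0:ℝ) (dist x y), ¬ t.1 ≤ dist x w →
      t.1 - dist x w ∈ Set.Icc (0:ℝ) (dist w y) := by
    intro t h
    exact ⟨sub_nonneg.2 (not_le.1 h).le, by have := t.2.2; linarith⟩
  classical
  set ψ : Set.Icc (0:ℝ) (dist x y) → T :=
    fun t => if h : t.1 ≤ dist x w then φ1 ⟨t.1, t.2.1, h⟩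
      else φ2 ⟨t.1 - dist x w, hbr t h⟩ with hψ
  have hval : ∀ (t : Set.Icc (0:ℝ) (dist x y)) (ht : t.1 ≤ dist x w),
      ψ t = φ1 ⟨t.1, t.2.1, ht⟩ := by
    intro t ht; simp only [hψ, dif_pos ht]
  have hval2 : ∀ (t : Set.Icc (0:ℝ) (dist x y)) (ht : ¬ t.1 ≤ dist x w),
      ψ t = φ2 ⟨t.1 - dist x w, hbr t ht⟩ := by
    intro t ht; simp only [hψ, dif_neg ht]
  refine ⟨ψ, ⟨?_, ?_, ?_⟩, hval⟩
  · have key : ∀ a b : Set.Icc (0:ℝ) (dist x y), a.1 ≤ b.1 →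
        dist (ψ a) (ψ b) = b.1 - a.1 := by
      intro a b hab
      by_cases ha : a.1 ≤ dist x w <;> by_cases hb : b.1 ≤ dist x w
      · rw [hval a ha, hval b hb, h1.1]
        rw [abs_of_nonpos (by simpa using hab)]; ring
      · rw [hval a ha, hval2 b hb]
        refine le_antisymm ?_ ?_
        · have t1 := dist_triangle (φ1 ⟨a.1, a.2.1, ha⟩) w (φ2 ⟨b.1 - dist x w, hbr b hb⟩)
          have e1 := h1.dist_right ⟨a.1, a.2.1, ha⟩
          have e2 := h2.dist_left ⟨b.1 - dist x w, hbr b hb⟩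
          rw [e1, e2] at t1
          dsimp only at t1
          linarith
        · have e1 := h1.dist_left ⟨a.1, a.2.1, ha⟩
          have e2 := h2.dist_right ⟨b.1 - dist x w, hbr b hb⟩
          have tri := dist_triangle4 x (φ1 ⟨a.1, a.2.1, ha⟩)
            (φ2 ⟨b.1 - dist x w, hbr b hb⟩) y
          have hb2 : b.1 ≤ dist x y := b.2.2
          dsimp only at e1 e2 tri
          linarith
      · exact absurd (le_trans hab hb) ha
      · rw [hval2 a ha, hval2 b hb, h2.1]
        have e : a.1 - dist x w - (b.1 - dist x w) = a.1 - b.1 := by ring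
        rw [e, abs_of_nonpos (by linarith)]; ring
    intro a b
    rcases le_total a.1 b.1 with h | h
    · rw [key a b h, abs_of_nonpos (by linarith)]; ring
    · rw [dist_comm, key b a h, abs_of_nonneg (by linarith)]
  · rw [hval _ dist_nonneg]; exact h1.2.1
  · by_cases hL : dist x y ≤ dist x w
    · rw [hval _ hL]
      have hxw : dist x w ≤ dist x y := by
        have := dist_nonneg (x := w) (y := y); linarith
      have heq : dist x y = dist x w := le_antisymm hL hxw
      have hwy : w = y := dist_eq_zero.mp (by linarith)
      have hcast : (⟨dist x y, dist_nonneg, hL⟩ : Set.Icc (0:ℝ) (dist x w)) =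
          ⟨dist x w, Set.mem_Icc.mpr ⟨dist_nonneg, le_rfl⟩⟩ := Subtype.ext heq
      rw [hcast, h1.2.2]; exact hwy
    · rw [hval2 _ hL]
      have : ∀ (p : dist x y - dist x w ∈ Set.Icc (0:ℝ) (dist w y)),
          φ2 ⟨dist x y - dist x w, p⟩ = y := by
        intro p
        have hcast : (⟨dist x y - dist x w, p⟩ : Set.Icc (0:ℝ) (dist w y)) =
            ⟨dist w y, Set.mem_Icc.mpr ⟨dist_nonneg, le_rfl⟩⟩ :=
          Subtype.ext (by show dist x y - dist x w = dist w y; linarith)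
        rw [hcast, h2.2.2]
      exact this _

/-- A point below `y` is on the canonical segment. -/
lemma treeLE.eq_segMap (hT : IsRTree T) {x w y : T} (hw : treeLE x w y) :
    segMap hT x y ⟨dist x w, Set.mem_Icc.mpr ⟨dist_nonneg, hw.height_le⟩⟩ = w := by
  obtain ⟨ψ, hψ, hval⟩ := exists_concat hw (segMap_spec hT x w) (segMap_spec hT w y)
  rw [← segMap_unique hT hψ, hval _ le_rfl]
  exact (segMap_spec hT x w).2.2

/-- Two points below a common point are comparable. -/
lemma treeLE.comparable (hT : IsRTree T) {ρ u v z : T}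
    (h1 : treeLE ρ u z) (h2 : treeLE ρ v z) : treeLE ρ u v ∨ treeLE ρ v u := by
  have hu := h1.eq_segMap hT
  have hv := h2.eq_segMap hT
  have hs := segMap_spec hT ρ z
  rcases le_total (dist ρ u) (dist ρ v) with h | h
  · left
    show dist ρ u + dist u v = dist ρ v
    rw [← hu, ← hv, hs.dist_left, hs.dist_left, hs.1]
    rw [abs_of_nonpos (by simpa using h)]
    ring
  · right
    show dist ρ v + dist v u = dist ρ u
    rw [← hu, ← hv, hs.dist_left, hs.dist_left, hs.1]
    rw [abs_of_nonpos (by simpa using h)]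
    ring

/-- Points on the canonical segment to `z` are between `q` and `z` in the root order. -/
lemma treeLE_of_seg (hT : IsRTree T) {ρ q z : T} (hqz : treeLE ρ q z) {t : ℝ}
    (ht : t ∈ Set.Icc (0:ℝ) (dist q z)) :
    treeLE ρ q (segMap hT q z ⟨t, ht⟩) ∧ treeLE ρ (segMap hT q z ⟨t, ht⟩) z ∧
      dist q (segMap hT q z ⟨t, ht⟩) = t := by
  have hb : treeLE q (segMap hT q z ⟨t, ht⟩) z := (segMap_spec hT q z).treeLE_pt _
  refine ⟨(hqz.between hb).1, (hqz.between hb).2, (segMap_spec hT q z).dist_left _⟩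

end Seg
section Div
variable {T : Type*} [MetricSpace T]

lemma exists_divergence (hT : IsRTree T) (x y z : T) :
    ∃ s : ℝ, 0 ≤ s ∧ s ≤ dist x y ∧ s ≤ dist x z ∧
      dist y z = (dist x y - s) + (dist x z - s) ∧
      ∀ (t : ℝ) (h1 : t ∈ Set.Icc (0:ℝ) (dist x y)) (h2 : t ∈ Set.Icc (0:ℝ) (dist x z)),
        t ≤ s → segMap hT x y ⟨t, h1⟩ = segMap hT x z ⟨t, h2⟩ := by
  classical
  have s1 := segMap_spec hT x y
  have s2 := segMap_spec hT x z
  set A : Set ℝ := {t | ∃ (h1 : t ∈ Set.Icc (0:ℝ) (dist x y))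
      (h2 : t ∈ Set.Icc (0:ℝ) (dist x z)),
    segMap hT x y ⟨t, h1⟩ = segMap hT x z ⟨t, h2⟩} with hA
  have h0A : (0:ℝ) ∈ A := by
    refine ⟨⟨le_rfl, dist_nonneg⟩, ⟨le_rfl, dist_nonneg⟩, ?_⟩
    exact s1.2.1.trans s2.2.1.symm
  have hbdd : BddAbove A := ⟨dist x y, fun t ht => by obtain ⟨h1, -, -⟩ := ht; exact h1.2⟩
  have hAne : A.Nonempty := ⟨0, h0A⟩
  set s := sSup A with hs
  have hs0 : 0 ≤ s := le_csSup hbdd h0A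
  have hsL1 : s ≤ dist x y := csSup_le hAne (fun t ht => by obtain ⟨h1, -, -⟩ := ht; exact h1.2)
  have hsL2 : s ≤ dist x z := csSup_le hAne (fun t ht => by obtain ⟨-, h2, -⟩ := ht; exact h2.2)
  have hdown : ∀ t ∈ A, ∀ t', 0 ≤ t' → t' ≤ t → t' ∈ A := by
    rintro t ⟨h1, h2, heq⟩ t' ht0 htt
    have m1 : t' ∈ Set.Icc (0:ℝ) (dist x y) := ⟨ht0, le_trans htt h1.2⟩
    have m2 : t' ∈ Set.Icc (0:ℝ) (dist x z) := ⟨ht0, le_trans htt h2.2⟩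
    refine ⟨m1, m2, ?_⟩
    set c := segMap hT x y ⟨t, h1⟩ with hc
    have d1 : dist x (segMap hT x y ⟨t', m1⟩) = t' := s1.dist_left _
    have d1' : dist (segMap hT x y ⟨t', m1⟩) c = t - t' := by
      rw [hc, s1.1]; dsimp only; rw [abs_of_nonpos (by linarith)]; ring
    have d2 : dist x (segMap hT x z ⟨t', m2⟩) = t' := s2.dist_left _
    have d2' : dist (segMap hT x z ⟨t', m2⟩) c = t - t' := by
      rw [hc, hc.symm.trans heq, s2.1]; dsimp only
      rw [abs_of_nonpos (by linarith)]; ring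
    have dxc : dist x c = t := s1.dist_left _
    have b1 : treeLE x (segMap hT x y ⟨t', m1⟩) c := by
      unfold treeLE; rw [d1, d1', dxc]; ring
    have b2 : treeLE x (segMap hT x z ⟨t', m2⟩) c := by
      unfold treeLE; rw [d2, d2', dxc]; ring
    have e1 := b1.eq_segMap hT
    have e2 := b2.eq_segMap hT
    rw [← e1, ← e2]
    congr 1
    exact Subtype.ext (d1.trans d2.symm)
  have hsA : s ∈ A := by
    have m1 : s ∈ Set.Icc (0:ℝ) (dist x y) := ⟨hs0, hsL1⟩
    have m2 : s ∈ Set.Icc (0:ℝ) (dist x z) := ⟨hs0, hsL2⟩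
    refine ⟨m1, m2, ?_⟩
    have key : ∀ ε > (0:ℝ), dist (segMap hT x y ⟨s, m1⟩) (segMap hT x z ⟨s, m2⟩) ≤ 2 * ε := by
      intro ε hε
      obtain ⟨t, htA, hlt⟩ := exists_lt_of_lt_csSup hAne (show s - ε < s by linarith)
      obtain ⟨h1, h2, heq⟩ := htA
      have hts : t ≤ s := le_csSup hbdd ⟨h1, h2, heq⟩
      calc dist (segMap hT x y ⟨s, m1⟩) (segMap hT x z ⟨s, m2⟩)
          ≤ dist (segMap hT x y ⟨s, m1⟩) (segMap hT x y ⟨t, h1⟩) +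
            dist (segMap hT x y ⟨t, h1⟩) (segMap hT x z ⟨s, m2⟩) := dist_triangle _ _ _
        _ ≤ ε + ε := by
            refine add_le_add ?_ ?_
            · rw [s1.1]; dsimp only; rw [abs_of_nonneg (by linarith)]; linarith
            · rw [heq, s2.1]; dsimp only; rw [abs_of_nonpos (by linarith)]; linarith
        _ = 2 * ε := by ring
    have hd0 : dist (segMap hT x y ⟨s, m1⟩) (segMap hT x z ⟨s, m2⟩) ≤ 0 := by
      by_contra hpos
      push_neg at hpos
      have := key (dist (segMap hT x y ⟨s, m1⟩) (segMap hT x z ⟨s, m2⟩) / 4) (by linarith)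
      linarith
    exact dist_le_zero.mp hd0
  obtain ⟨mm1, mm2, hseq⟩ := hsA
  have hsA' : s ∈ A := ⟨mm1, mm2, hseq⟩
  have hgro : dist y z = (dist x y - s) + (dist x z - s) := by
    by_cases hcc1 : s = dist x y
    · have hy : segMap hT x y ⟨s, mm1⟩ = y := by
        have hcast : (⟨s, mm1⟩ : Set.Icc (0:ℝ) (dist x y)) =
            ⟨dist x y, Set.mem_Icc.mpr ⟨dist_nonneg, le_rfl⟩⟩ := Subtype.ext hcc1
        rw [hcast]; exact s1.2.2
      have hdyz : dist y z = dist x z - s := by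
        rw [← hy, hseq]; exact s2.dist_right _
      rw [hdyz, hcc1]; ring
    by_cases hcc2 : s = dist x z
    · have hz : segMap hT x z ⟨s, mm2⟩ = z := by
        have hcast : (⟨s, mm2⟩ : Set.Icc (0:ℝ) (dist x z)) =
            ⟨dist x z, Set.mem_Icc.mpr ⟨dist_nonneg, le_rfl⟩⟩ := Subtype.ext hcc2
        rw [hcast]; exact s2.2.2
      have hdyz : dist y z = dist x y - s := by
        rw [dist_comm, ← hz, ← hseq]; exact s1.dist_right _
      rw [hdyz, hcc2]; ring
    · -- main case : build an arc from y to z through the divergence point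
      have hlt1 : s < dist x y := lt_of_le_of_ne hsL1 hcc1
      have hlt2 : s < dist x z := lt_of_le_of_ne hsL2 hcc2
      set a := dist x y - s with ha'
      set b := dist x z - s with hb'
      have ha : 0 < a := by simp only [ha']; linarith
      have hb : 0 < b := by simp only [hb']; linarith
      have hab : 0 < a + b := by linarith
      set f1 : ℝ → T := fun v => segMap hT x y (Set.projIcc 0 (dist x y) dist_nonneg v)
        with hf1
      set f2 : ℝ → T := fun v => segMap hT x z (Set.projIcc 0 (dist x z) dist_nonneg v)
        with hf2
      have hf1v : ∀ (v : ℝ) (hv : v ∈ Set.Icc (0:ℝ) (dist x y)),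
          f1 v = segMap hT x y ⟨v, hv⟩ := by
        intro v hv; rw [hf1]; dsimp only; rw [Set.projIcc_of_mem]
      have hf2v : ∀ (v : ℝ) (hv : v ∈ Set.Icc (0:ℝ) (dist x z)),
          f2 v = segMap hT x z ⟨v, hv⟩ := by
        intro v hv; rw [hf2]; dsimp only; rw [Set.projIcc_of_mem]
      set c : Set.Icc (0:ℝ) 1 → T := fun u =>
        if u.1 * (a + b) ≤ a then f1 (dist x y - u.1 * (a + b))
        else f2 (s + (u.1 * (a + b) - a)) with hcdef
      have hmem1 : ∀ u : Set.Icc (0:ℝ) 1, u.1 * (a+b) ≤ a →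
          dist x y - u.1 * (a+b) ∈ Set.Icc (0:ℝ) (dist x y) := by
        intro u hu
        have h0 : 0 ≤ u.1 * (a+b) := mul_nonneg u.2.1 hab.le
        exact ⟨by linarith, by linarith⟩
      have hmem2 : ∀ u : Set.Icc (0:ℝ) 1, ¬ u.1 * (a+b) ≤ a →
          s + (u.1 * (a+b) - a) ∈ Set.Icc (0:ℝ) (dist x z) := by
        intro u hu
        push_neg at hu
        have h1 : u.1 * (a+b) ≤ a + b := by
          calc u.1 * (a+b) ≤ 1 * (a+b) := by
                apply mul_le_mul_of_nonneg_right u.2.2 hab.le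
            _ = a + b := one_mul _
        exact ⟨by linarith, by linarith⟩
      have hcont : Continuous c := by
        rw [hcdef]
        apply Continuous.if_le
        · exact (s1.continuous.comp continuous_projIcc).comp
            (continuous_const.sub ((continuous_subtype_val).mul continuous_const))
        · exact (s2.continuous.comp continuous_projIcc).comp
            (continuous_const.add ((continuous_subtype_val.mul continuous_const).sub
              continuous_const))
        · exact continuous_subtype_val.mul continuous_const
        · exact continuous_const
        · intro u hu
          have e1 : dist x y - u.1 * (a+b) = s := by rw [hu]; simp only [ha']; ring
          have e2 : s + (u.1 * (a+b) - a) = s := by rw [hu]; ring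
          rw [e1, e2, hf1v s ⟨hs0, hsL1⟩, hf2v s ⟨hs0, hsL2⟩]
          exact hseq
      have hvalpos : ∀ (u : Set.Icc (0:ℝ) 1) (hu : u.1 * (a+b) ≤ a),
          c u = segMap hT x y ⟨dist x y - u.1 * (a+b), hmem1 u hu⟩ := by
        intro u hu
        rw [hcdef]; dsimp only; rw [if_pos hu, hf1v _ (hmem1 u hu)]
      have hvalneg : ∀ (u : Set.Icc (0:ℝ) 1) (hu : ¬ u.1 * (a+b) ≤ a),
          c u = segMap hT x z ⟨s + (u.1 * (a+b) - a), hmem2 u hu⟩ := by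
        intro u hu
        rw [hcdef]; dsimp only; rw [if_neg hu, hf2v _ (hmem2 u hu)]
      have hinj : Function.Injective c := by
        have main : ∀ u1 u2 : Set.Icc (0:ℝ) 1, u1.1 * (a+b) ≤ a → ¬ u2.1 * (a+b) ≤ a →
            c u1 ≠ c u2 := by
          intro u1 u2 hu1 hu2 hc12
          rw [hvalpos u1 hu1, hvalneg u2 hu2] at hc12
          set t1 := dist x y - u1.1 * (a+b) with ht1
          set t2 := s + (u2.1 * (a+b) - a) with ht2
          have ht12 : t1 = t2 := by
            have l1 := s1.dist_left ⟨t1, hmem1 u1 hu1⟩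
            have l2 := s2.dist_left ⟨t2, hmem2 u2 hu2⟩
            rw [hc12] at l1
            rw [l2] at l1
            exact l1.symm
          have ht2s : s < t2 := by
            push_neg at hu2
            simp only [ht2]; linarith
          have ht1A : t1 ∈ A :=
            ⟨hmem1 u1 hu1, by rw [ht12]; exact hmem2 u2 hu2,
              hc12.trans (congrArg _ (Subtype.ext ht12.symm))⟩
          have : t1 ≤ s := le_csSup hbdd ht1A
          rw [ht12] at this
          linarith
        intro u1 u2 h12
        by_cases hu1 : u1.1 * (a+b) ≤ a <;> by_cases hu2 : u2.1 * (a+b) ≤ a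
        · rw [hvalpos u1 hu1, hvalpos u2 hu2] at h12
          have l1 := s1.dist_left ⟨_, hmem1 u1 hu1⟩
          rw [h12, s1.dist_left ⟨_, hmem1 u2 hu2⟩] at l1
          apply Subtype.ext
          have : u1.1 * (a+b) = u2.1 * (a+b) := by dsimp only at l1; linarith
          exact mul_right_cancel₀ (ne_of_gt hab) this
        · exact absurd h12 (main u1 u2 hu1 hu2)
        · exact absurd h12.symm (main u2 u1 hu2 hu1)
        · rw [hvalneg u1 hu1, hvalneg u2 hu2] at h12
          have l1 := s2.dist_left ⟨_, hmem2 u1 hu1⟩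
          rw [h12, s2.dist_left ⟨_, hmem2 u2 hu2⟩] at l1
          apply Subtype.ext
          have : u1.1 * (a+b) = u2.1 * (a+b) := by dsimp only at l1; linarith
          exact mul_right_cancel₀ (ne_of_gt hab) this
      have gy : ∀ (v : ℝ) (p : v ∈ Set.Icc (0:ℝ) (dist x y)), v = dist x y →
          segMap hT x y ⟨v, p⟩ = y := by
        intro v p hv
        have hcast : (⟨v, p⟩ : Set.Icc (0:ℝ) (dist x y)) =
            ⟨dist x y, Set.mem_Icc.mpr ⟨dist_nonneg, le_rfl⟩⟩ := Subtype.ext hv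
        rw [hcast]; exact s1.2.2
      have gz : ∀ (v : ℝ) (p : v ∈ Set.Icc (0:ℝ) (dist x z)), v = dist x z →
          segMap hT x z ⟨v, p⟩ = z := by
        intro v p hv
        have hcast : (⟨v, p⟩ : Set.Icc (0:ℝ) (dist x z)) =
            ⟨dist x z, Set.mem_Icc.mpr ⟨dist_nonneg, le_rfl⟩⟩ := Subtype.ext hv
        rw [hcast]; exact s2.2.2
      have gw : ∀ (v : ℝ) (p : v ∈ Set.Icc (0:ℝ) (dist x y)), v = s →
          segMap hT x y ⟨v, p⟩ = segMap hT x y ⟨s, mm1⟩ :=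
        fun v p hv => congrArg _ (Subtype.ext hv)
      have hc0 : c ⟨0, Set.mem_Icc.mpr ⟨le_rfl, zero_le_one⟩⟩ = y := by
        have hu : ((⟨0, Set.mem_Icc.mpr ⟨le_rfl, zero_le_one⟩⟩ : Set.Icc (0:ℝ) 1)).1 * (a+b) ≤ a := by
          dsimp only; rw [zero_mul]; exact ha.le
        rw [hvalpos _ hu]
        exact gy _ _ (by dsimp only; rw [zero_mul, sub_zero])
      have hc1 : c ⟨1, Set.mem_Icc.mpr ⟨zero_le_one, le_rfl⟩⟩ = z := by
        have hu : ¬ ((⟨1, Set.mem_Icc.mpr ⟨zero_le_one, le_rfl⟩⟩ : Set.Icc (0:ℝ) 1)).1 * (a+b) ≤ a := by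
          dsimp only; rw [one_mul]; push_neg; linarith
        rw [hvalneg _ hu]
        exact gz _ _ (by dsimp only; rw [one_mul]; simp only [hb']; ring)
      have harc := hT.2 c hcont hinj
        (segMap hT (c ⟨0, Set.mem_Icc.mpr ⟨le_rfl, zero_le_one⟩⟩)
          (c ⟨1, Set.mem_Icc.mpr ⟨zero_le_one, le_rfl⟩⟩)) (segMap_spec hT _ _)
      set w := segMap hT x y ⟨s, mm1⟩ with hw
      have hwrange : w ∈ Set.range c := by
        have hmem : a / (a+b) ∈ Set.Icc (0:ℝ) 1 :=
          ⟨by positivity, by rw [div_le_one hab]; linarith⟩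
        refine ⟨⟨a / (a+b), hmem⟩, ?_⟩
        have hu : ((⟨a / (a+b), hmem⟩ : Set.Icc (0:ℝ) 1)).1 * (a+b) ≤ a := by
          dsimp only; rw [div_mul_cancel₀ _ (ne_of_gt hab)]
        rw [hvalpos _ hu]
        exact gw _ _ (by dsimp only; rw [div_mul_cancel₀ _ (ne_of_gt hab)]; simp only [ha']; ring)
      rw [harc] at hwrange
      obtain ⟨tstar, htstar⟩ := hwrange
      have sp := segMap_spec hT (c ⟨0, Set.mem_Icc.mpr ⟨le_rfl, zero_le_one⟩⟩)
        (c ⟨1, Set.mem_Icc.mpr ⟨zero_le_one, le_rfl⟩⟩)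
      have hd1 : dist (c ⟨0, Set.mem_Icc.mpr ⟨le_rfl, zero_le_one⟩⟩) w = tstar.1 := by
        rw [← htstar]; exact sp.dist_left _
      have hd2 : dist w (c ⟨1, Set.mem_Icc.mpr ⟨zero_le_one, le_rfl⟩⟩) =
          dist (c ⟨0, Set.mem_Icc.mpr ⟨le_rfl, zero_le_one⟩⟩)
            (c ⟨1, Set.mem_Icc.mpr ⟨zero_le_one, le_rfl⟩⟩) - tstar.1 := by
        rw [← htstar]; exact sp.dist_right _
      have hsum : dist y w + dist w z = dist y z := by
        rw [← hc0, ← hc1]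
        rw [hd1, hd2]
        ring
      have hyw : dist y w = dist x y - s := by
        rw [dist_comm y w]
        exact s1.dist_right _
      have hwz : dist w z = dist x z - s := by
        rw [hseq]
        exact s2.dist_right _
      rw [← hsum, hyw, hwz]
  refine ⟨s, hs0, hsL1, hsL2, hgro, ?_⟩
  intro t h1 h2 hts
  obtain ⟨p1, p2, he⟩ := hdown s hsA' t h1.1 hts
  exact he

end Div
section Meet
variable {T : Type*} [MetricSpace T]

lemma exists_meet (hT : IsRTree T) (ρ u v : T) :
    ∃ w, treeLE ρ w u ∧ treeLE ρ w v ∧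
      dist ρ w = (dist ρ u + dist ρ v - dist u v) / 2 := by
  obtain ⟨s, h0, h1, h2, hdist, hagree⟩ := exists_divergence hT ρ u v
  refine ⟨segMap hT ρ u ⟨s, h0, h1⟩, ?_, ?_, ?_⟩
  · show dist ρ _ + dist _ u = dist ρ u
    rw [(segMap_spec hT ρ u).dist_left, (segMap_spec hT ρ u).dist_right]; ring
  · rw [hagree s ⟨h0, h1⟩ ⟨h0, h2⟩ le_rfl]
    show dist ρ _ + dist _ v = dist ρ v
    rw [(segMap_spec hT ρ v).dist_left, (segMap_spec hT ρ v).dist_right]; ring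
  · rw [(segMap_spec hT ρ u).dist_left]; dsimp only; linarith

noncomputable def meet (hT : IsRTree T) (ρ u v : T) : T := (exists_meet hT ρ u v).choose

lemma meet_le_left (hT : IsRTree T) (ρ u v : T) : treeLE ρ (meet hT ρ u v) u :=
  (exists_meet hT ρ u v).choose_spec.1

lemma meet_le_right (hT : IsRTree T) (ρ u v : T) : treeLE ρ (meet hT ρ u v) v :=
  (exists_meet hT ρ u v).choose_spec.2.1

lemma height_meet (hT : IsRTree T) (ρ u v : T) :
    dist ρ (meet hT ρ u v) = (dist ρ u + dist ρ v - dist u v) / 2 :=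
  (exists_meet hT ρ u v).choose_spec.2.2

lemma treeLE_meet (hT : IsRTree T) {ρ a u v : T} (h1 : treeLE ρ a u) (h2 : treeLE ρ a v) :
    treeLE ρ a (meet hT ρ u v) := by
  have hw1 := meet_le_left hT ρ u v
  have hw2 := meet_le_right hT ρ u v
  have hh := height_meet hT ρ u v
  have hha : dist ρ a ≤ dist ρ (meet hT ρ u v) := by
    have t1 : dist u v ≤ dist u a + dist a v := dist_triangle _ _ _
    have e1 : dist a u = dist ρ u - dist ρ a := h1.dist_eq
    have e2 : dist a v = dist ρ v - dist ρ a := h2.dist_eq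
    rw [dist_comm u a] at t1
    rw [hh]; linarith
  rcases treeLE.comparable hT h1 hw1 with h | h
  · exact h
  · rw [h.eq_of_height_le hha]; exact treeLE_refl _ _

lemma dist_meet (hT : IsRTree T) (ρ u v : T) :
    dist u v = dist u (meet hT ρ u v) + dist (meet hT ρ u v) v := by
  have e1 : dist (meet hT ρ u v) u = dist ρ u - dist ρ (meet hT ρ u v) :=
    (meet_le_left hT ρ u v).dist_eq
  have e2 : dist (meet hT ρ u v) v = dist ρ v - dist ρ (meet hT ρ u v) :=
    (meet_le_right hT ρ u v).dist_eq
  have hh := height_meet hT ρ u v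
  rw [dist_comm u (meet hT ρ u v)]
  linarith

end Meet

section Topology
variable {T : Type*} [MetricSpace T]

lemma isClosed_subtreeAt (ρ x : T) : IsClosed (subtreeAt ρ x) := by
  have h : subtreeAt ρ x = {w | dist ρ x + dist x w = dist ρ w} := rfl
  rw [h]
  exact isClosed_eq (continuous_const.add (Continuous.dist continuous_const continuous_id))
    (Continuous.dist continuous_const continuous_id)

lemma isOpen_strictSubtree (hT : IsRTree T) (ρ x : T) :
    IsOpen (subtreeAt ρ x \ {x}) := by
  rw [Metric.isOpen_iff]
  rintro z ⟨hz, hzx⟩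
  have hzx' : z ≠ x := by simpa using hzx
  refine ⟨dist x z, dist_pos.mpr (Ne.symm hzx'), ?_⟩
  intro z' hz'
  rw [Metric.mem_ball] at hz'
  have hw1 := meet_le_left hT ρ z z'
  have hw2 := meet_le_right hT ρ z z'
  have hh := height_meet hT ρ z z'
  have hhx : dist ρ x < dist ρ (meet hT ρ z z') := by
    have e : dist x z = dist ρ z - dist ρ x := hz.dist_eq
    have tri : dist ρ z ≤ dist ρ z' + dist z' z := dist_triangle _ _ _
    have hcm : dist z z' = dist z' z := dist_comm _ _
    rw [hh]; linarith
  rcases treeLE.comparable hT hz hw1 with h | h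
  · refine ⟨h.trans hw2, fun hx => ?_⟩
    have hle := hw2.height_le
    rw [Set.mem_singleton_iff] at hx
    have hle' : dist ρ z' = dist ρ x := by rw [hx]
    linarith
  · exact absurd h.height_le (by linarith)

end Topology
section Cutset
variable {T : Type*} [MetricSpace T]

lemma cutset_sum (hT : IsRTree T) (ρ : T) (m : T → ℝ)
    (hnonneg : ∀ x, 0 ≤ m x)
    (hdec : ∀ x y, treeLE ρ x y → m y ≤ m x)
    (hplus : ∀ (x : T) (C : Finset T),
      (∀ y ∈ C, treeLE ρ x y ∧ y ≠ x) →
      (∀ y ∈ C, ∀ z ∈ C, y ≠ z → dist y z = dist y x + dist x z) →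
      ∑ y ∈ C, sSup (m '' {z | treeLE ρ x z ∧ treeLE ρ z y ∧ z ≠ x}) ≤ m x) :
    ∀ (x : T) (C : Finset T), (∀ c ∈ C, treeLE ρ x c) →
      (∀ c ∈ C, ∀ c' ∈ C, c ≠ c' → ¬ treeLE ρ c c') →
      ∑ c ∈ C, m c ≤ m x := by
  classical
  suffices H : ∀ (n : ℕ) (x : T) (C : Finset T), C.card ≤ n → (∀ c ∈ C, treeLE ρ x c) →
      (∀ c ∈ C, ∀ c' ∈ C, c ≠ c' → ¬ treeLE ρ c c') → ∑ c ∈ C, m c ≤ m x by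
    intro x C h1 h2; exact H C.card x C le_rfl h1 h2
  intro n
  induction n with
  | zero =>
    intro x C hcard _ _
    have : C = ∅ := Finset.card_eq_zero.mp (Nat.le_zero.mp hcard)
    rw [this, Finset.sum_empty]
    exact hnonneg x
  | succ n ih =>
    intro x C hcard hCle hCinc
    by_cases hle : C.card ≤ n
    · exact ih x C hle hCle hCinc
    have hcardeq : C.card = n + 1 := le_antisymm hcard (not_le.mp hle)
    by_cases hsmall : C.card ≤ 1
    · rcases Finset.card_le_one_iff_subsingleton_coe.mp hsmall with _
      rcases Nat.le_one_iff_eq_zero_or_eq_one.mp hsmall with h0 | h1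
      · rw [Finset.card_eq_zero.mp h0, Finset.sum_empty]; exact hnonneg x
      · obtain ⟨c, hc⟩ := Finset.card_eq_one.mp h1
        rw [hc, Finset.sum_singleton]
        exact hdec x c (hCle c (by rw [hc]; exact Finset.mem_singleton_self c))
    -- at least two elements
    push_neg at hsmall
    obtain ⟨c₀, hc₀, c₁, hc₁, hne01⟩ := Finset.one_lt_card.mp hsmall
    set M : Finset T := ((C ×ˢ C).filter (fun p => p.1 ≠ p.2)).image
      (fun p => meet hT ρ p.1 p.2) with hM
    have hMne : M.Nonempty := by
      refine ⟨meet hT ρ c₀ c₁, Finset.mem_image.mpr ⟨(c₀, c₁), ?_, rfl⟩⟩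
      rw [Finset.mem_filter]
      exact ⟨Finset.mk_mem_product hc₀ hc₁, hne01⟩
    obtain ⟨w, hwM, hwmax⟩ := M.exists_max_image (fun w => dist ρ w) hMne
    obtain ⟨p, hpmem, hpw⟩ := Finset.mem_image.mp hwM
    rw [Finset.mem_filter] at hpmem
    obtain ⟨hpC, hpne⟩ := hpmem
    have hp1 : p.1 ∈ C := (Finset.mem_product.mp hpC).1
    have hp2 : p.2 ∈ C := (Finset.mem_product.mp hpC).2
    have hwle1 : treeLE ρ w p.1 := hpw ▸ meet_le_left hT ρ p.1 p.2
    have hwle2 : treeLE ρ w p.2 := hpw ▸ meet_le_right hT ρ p.1 p.2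
    -- maximality in the tree order
    have hwmax' : ∀ w' ∈ M, treeLE ρ w w' → w = w' := by
      intro w' hw' hww'
      exact hww'.eq_of_height_le (hwmax w' hw')
    set Cw : Finset T := C.filter (fun c => treeLE ρ w c) with hCw
    have hc₀w : p.1 ∈ Cw := Finset.mem_filter.mpr ⟨hp1, hwle1⟩
    have hc₁w : p.2 ∈ Cw := Finset.mem_filter.mpr ⟨hp2, hwle2⟩
    -- every element of Cw is ≠ w
    have hCwne : ∀ c ∈ Cw, c ≠ w := by
      intro c hc hcw
      rw [Finset.mem_filter] at hc
      rcases eq_or_ne c p.1 with h | h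
      · exact hCinc c hc.1 p.2 hp2 (by rw [h]; exact hpne) (hcw ▸ hwle2)
      · exact hCinc c hc.1 p.1 hp1 h (hcw ▸ hwle1)
    -- pairwise meets in Cw are exactly w
    have hmeets : ∀ c ∈ Cw, ∀ c' ∈ Cw, c ≠ c' → meet hT ρ c c' = w := by
      intro c hc c' hc' hcc
      rw [Finset.mem_filter] at hc hc'
      have hin : meet hT ρ c c' ∈ M := by
        refine Finset.mem_image.mpr ⟨(c, c'), ?_, rfl⟩
        rw [Finset.mem_filter]
        exact ⟨Finset.mk_mem_product hc.1 hc'.1, hcc⟩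
      exact (hwmax' _ hin (treeLE_meet hT hc.2 hc'.2)).symm
    have hsep : ∀ c ∈ Cw, ∀ c' ∈ Cw, c ≠ c' → dist c c' = dist c w + dist w c' := by
      intro c hc c' hc' hcc
      have := dist_meet hT ρ c c'
      rw [hmeets c hc c' hc' hcc] at this
      exact this
    have hCwcond : ∀ c ∈ Cw, treeLE ρ w c ∧ c ≠ w := by
      intro c hc
      exact ⟨(Finset.mem_filter.mp hc).2, hCwne c hc⟩
    have hplusw := hplus w Cw hCwcond hsep
    have hsup : ∀ c ∈ Cw, m c ≤ sSup (m '' {z | treeLE ρ w z ∧ treeLE ρ z c ∧ z ≠ w}) := by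
      intro c hc
      apply le_csSup
      · refine ⟨m w, ?_⟩
        rintro v ⟨z, hz, rfl⟩
        exact hdec w z hz.1
      · exact ⟨c, ⟨(Finset.mem_filter.mp hc).2, treeLE_refl ρ c, hCwne c hc⟩, rfl⟩
    have hCwsum : ∑ c ∈ Cw, m c ≤ m w :=
      le_trans (Finset.sum_le_sum hsup) hplusw
    -- the reduced cutset
    have hwnotin : w ∉ C \ Cw := by
      intro hw
      rw [Finset.mem_sdiff] at hw
      exact hw.2 (Finset.mem_filter.mpr ⟨hw.1, treeLE_refl ρ w⟩)
    have hxw : treeLE ρ x w := by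
      rw [← hpw]
      exact treeLE_meet hT (hCle p.1 hp1) (hCle p.2 hp2)
    have hCwsub : Cw ⊆ C := Finset.filter_subset _ _
    have hcw2 : 2 ≤ Cw.card := by
      have : ({p.1, p.2} : Finset T) ⊆ Cw := by
        intro c hc
        rcases Finset.mem_insert.mp hc with h | h
        · rw [h]; exact hc₀w
        · rw [Finset.mem_singleton.mp h]; exact hc₁w
      calc 2 = ({p.1, p.2} : Finset T).card := (Finset.card_pair hpne).symm
        _ ≤ Cw.card := Finset.card_le_card this
    have hcard' : (insert w (C \ Cw)).card ≤ n := by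
      have h1 := Finset.card_insert_le w (C \ Cw)
      have h2 : (C \ Cw).card = C.card - Cw.card := Finset.card_sdiff_of_subset hCwsub
      have h3 := Finset.card_le_card hCwsub
      omega
    have hcond1 : ∀ c ∈ insert w (C \ Cw), treeLE ρ x c := by
      intro c hc
      rcases Finset.mem_insert.mp hc with h | h
      · rw [h]; exact hxw
      · exact hCle c (Finset.mem_sdiff.mp h).1
    have hcond2 : ∀ c ∈ insert w (C \ Cw), ∀ c' ∈ insert w (C \ Cw), c ≠ c' →
        ¬ treeLE ρ c c' := by
      have haux : ∀ c ∈ C \ Cw, ¬ treeLE ρ w c := by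
        intro c hc hwc
        rw [Finset.mem_sdiff] at hc
        exact hc.2 (Finset.mem_filter.mpr ⟨hc.1, hwc⟩)
      have haux2 : ∀ c ∈ C \ Cw, ¬ treeLE ρ c w := by
        intro c hc hcw
        rw [Finset.mem_sdiff] at hc
        have hcp1 : c ≠ p.1 := by
          intro h
          exact hc.2 (Finset.mem_filter.mpr ⟨hc.1, h ▸ hwle1⟩)
        exact hCinc c hc.1 p.1 hp1 hcp1 (hcw.trans hwle1)
      intro c hc c' hc' hcc
      rcases Finset.mem_insert.mp hc with h | h <;>
        rcases Finset.mem_insert.mp hc' with h' | h'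
      · exact absurd (h.trans h'.symm) hcc
      · rw [h]; exact haux c' h'
      · rw [h']; exact haux2 c h
      · exact hCinc c (Finset.mem_sdiff.mp h).1 c' (Finset.mem_sdiff.mp h').1 hcc
    have hih := ih x (insert w (C \ Cw)) hcard' hcond1 hcond2
    rw [Finset.sum_insert hwnotin] at hih
    have hsplit : ∑ c ∈ C, m c = ∑ c ∈ Cw, m c + ∑ c ∈ C \ Cw, m c := by
      rw [hCw, ← Finset.filter_not]
      exact (Finset.sum_filter_add_sum_filter_not C (fun c => treeLE ρ w c) m).symm
    rw [hsplit]
    linarith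
end Cutset
section FinCover
variable {T : Type*} [MetricSpace T]

lemma real_sum_biUnion_le {ι α : Type*} [DecidableEq α] (f : α → ℝ) :
    ∀ (F : Finset ι) (W : ι → Finset α), (∀ t ∈ F.biUnion W, 0 ≤ f t) →
      ∑ t ∈ F.biUnion W, f t ≤ ∑ i ∈ F, ∑ t ∈ W i, f t := by
  classical
  intro F
  induction F using Finset.induction_on with
  | empty => intro W _; simp
  | insert _ _ ha ih =>
    rename_i a F'
    intro W hf
    rw [Finset.biUnion_insert, Finset.sum_insert ha]
    have h1 : ∑ t ∈ W a ∪ F'.biUnion W, f t ≤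
        ∑ t ∈ W a, f t + ∑ t ∈ F'.biUnion W, f t := by
      have h2 : ∑ t ∈ W a ∪ F'.biUnion W, f t + ∑ t ∈ W a ∩ F'.biUnion W, f t =
          ∑ t ∈ W a, f t + ∑ t ∈ F'.biUnion W, f t := Finset.sum_union_inter
      have h3 : 0 ≤ ∑ t ∈ W a ∩ F'.biUnion W, f t := by
        apply Finset.sum_nonneg
        intro t ht
        exact hf t (by
          rw [Finset.biUnion_insert]
          exact Finset.mem_union_right _ (Finset.mem_inter.mp ht).2)
      linarith
    refine le_trans h1 (add_le_add le_rfl (ih W fun t ht => hf t ?_))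
    rw [Finset.biUnion_insert]
    exact Finset.mem_union_right _ ht

lemma fin_cover (hT : IsRTree T) (ρ : T) (m : T → ℝ)
    (hnonneg : ∀ x, 0 ≤ m x)
    (hdec : ∀ x y, treeLE ρ x y → m y ≤ m x)
    (hplus : ∀ (x : T) (C : Finset T),
      (∀ y ∈ C, treeLE ρ x y ∧ y ≠ x) →
      (∀ y ∈ C, ∀ z ∈ C, y ≠ z → dist y z = dist y x + dist x z) →
      ∑ y ∈ C, sSup (m '' {z | treeLE ρ x z ∧ treeLE ρ z y ∧ z ≠ x}) ≤ m x)
    {ι : Type*} [DecidableEq ι] [DecidableEq T] (F : Finset ι) (b : ι → T) (D : ι → Finset T) (x₀ : T)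
    (hD1 : ∀ i ∈ F, ∀ d ∈ D i, treeLE ρ (b i) d)
    (hD2 : ∀ i ∈ F, ∀ d ∈ D i, ∀ d' ∈ D i, d ≠ d' → ¬ treeLE ρ d d')
    (hcov : ∀ y ∈ insert x₀ (F.biUnion (fun i => insert (b i) (D i))), treeLE ρ x₀ y →
      ∃ i ∈ F, treeLE ρ (b i) y ∧ ∀ d ∈ D i, ¬ treeLE ρ d y) :
    m x₀ ≤ ∑ i ∈ F, (m (b i) - ∑ d ∈ D i, m d) := by
  classical
  set G : Finset T := insert x₀ (F.biUnion (fun i => insert (b i) (D i))) with hG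
  have hx₀G : x₀ ∈ G := Finset.mem_insert_self _ _
  have hbG : ∀ i ∈ F, b i ∈ G := by
    intro i hi
    rw [hG]
    exact Finset.mem_insert_of_mem (Finset.mem_biUnion.mpr
      ⟨i, hi, Finset.mem_insert_self _ _⟩)
  have hdG : ∀ i ∈ F, ∀ d ∈ D i, d ∈ G := by
    intro i hi d hd
    rw [hG]
    exact Finset.mem_insert_of_mem (Finset.mem_biUnion.mpr
      ⟨i, hi, Finset.mem_insert_of_mem hd⟩)
  set sc : T → Finset T := fun g => G.filter (fun s => treeLE ρ g s ∧ s ≠ g ∧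
    ∀ h ∈ G, treeLE ρ g h → treeLE ρ h s → h = g ∨ h = s) with hsc
  set up : T → Finset T := fun y => G.filter (fun g => treeLE ρ y g) with hup
  set ν : T → ℝ := fun g => m g - ∑ s ∈ sc g, m s with hν
  set Wi : ι → Finset T := fun i => G.filter (fun g => treeLE ρ (b i) g ∧
    ∀ d ∈ D i, ¬ treeLE ρ d g) with hWi
  have mem_sc : ∀ g s, s ∈ sc g ↔ s ∈ G ∧ treeLE ρ g s ∧ s ≠ g ∧
      ∀ h ∈ G, treeLE ρ g h → treeLE ρ h s → h = g ∨ h = s := by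
    intro g s; rw [hsc]; exact Finset.mem_filter
  have mem_up : ∀ y g, g ∈ up y ↔ g ∈ G ∧ treeLE ρ y g := by
    intro y g; rw [hup]; exact Finset.mem_filter
  have mem_Wi : ∀ i g, g ∈ Wi i ↔ g ∈ G ∧ treeLE ρ (b i) g ∧
      ∀ d ∈ D i, ¬ treeLE ρ d g := by
    intro i g; rw [hWi]; exact Finset.mem_filter
  -- incomparability of successors
  have sc_incomp : ∀ g, ∀ s ∈ sc g, ∀ s' ∈ sc g, s ≠ s' → ¬ treeLE ρ s s' := by
    intro g s hs s' hs' hne hss'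
    obtain ⟨hsG, hgs, hsneg, _⟩ := (mem_sc g s).mp hs
    obtain ⟨hs'G, hgs', hs'neg, hmin'⟩ := (mem_sc g s').mp hs'
    rcases hmin' s hsG hgs hss' with h | h
    · exact hsneg h
    · exact hne h
  have ν_nonneg : ∀ g, 0 ≤ ν g := by
    intro g
    have := cutset_sum hT ρ m hnonneg hdec hplus g (sc g)
      (fun s hs => ((mem_sc g s).mp hs).2.1) (sc_incomp g)
    rw [hν]; dsimp only; linarith
  -- telescoping identity
  have telescope : ∀ y ∈ G, ∑ g ∈ up y, ν g = m y := by
    intro y hy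
    have hbiU : (up y).biUnion sc = G.filter (fun g' => treeLE ρ y g' ∧ g' ≠ y) := by
      ext g'
      rw [Finset.mem_biUnion, Finset.mem_filter]
      constructor
      · rintro ⟨g, hg, hs⟩
        obtain ⟨hgG, hyg⟩ := (mem_up y g).mp hg
        obtain ⟨hg'G, hgg', hg'ne, _⟩ := (mem_sc g g').mp hs
        refine ⟨hg'G, hyg.trans hgg', fun hg'y => ?_⟩
        exact hg'ne (hgg'.antisymm (hg'y ▸ hyg)).symm
      · rintro ⟨hg'G, hyg', hne⟩
        set P : Finset T := G.filter
          (fun h => treeLE ρ y h ∧ treeLE ρ h g' ∧ h ≠ g') with hPdef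
        have hyP : y ∈ P := Finset.mem_filter.mpr
          ⟨hy, treeLE_refl ρ y, hyg', fun h => hne h.symm⟩
        obtain ⟨p, hpP, hpmax⟩ := P.exists_max_image (fun h => dist ρ h) ⟨y, hyP⟩
        obtain ⟨hpG, hyp, hpg', hpne⟩ := Finset.mem_filter.mp hpP
        refine ⟨p, (mem_up y p).mpr ⟨hpG, hyp⟩, (mem_sc p g').mpr
          ⟨hg'G, hpg', fun h => hpne h.symm, ?_⟩⟩
        intro h hhG hph hhg'
        by_cases hhcase : h = g'
        · right; exact hhcase
        · left
          have hhP : h ∈ P := Finset.mem_filter.mpr ⟨hhG, hyp.trans hph, hhg', hhcase⟩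
          exact (hph.eq_of_height_le (hpmax h hhP)).symm
    have hdisj : Set.PairwiseDisjoint ↑(up y) sc := by
      intro g₁ hg₁ g₂ hg₂ hne
      simp only [Function.onFun]
      rw [Finset.disjoint_left]
      intro s hs₁ hs₂
      obtain ⟨hsG, hg₁s, hsneg₁, hmin₁⟩ := (mem_sc g₁ s).mp hs₁
      obtain ⟨_, hg₂s, hsneg₂, hmin₂⟩ := (mem_sc g₂ s).mp hs₂
      have hg₁G : g₁ ∈ G := ((mem_up y g₁).mp (Finset.mem_coe.mp hg₁)).1
      have hg₂G : g₂ ∈ G := ((mem_up y g₂).mp (Finset.mem_coe.mp hg₂)).1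
      rcases treeLE.comparable hT hg₁s hg₂s with h | h
      · rcases hmin₁ g₂ hg₂G h hg₂s with h' | h'
        · exact hne h'.symm
        · exact hsneg₂ h'.symm
      · rcases hmin₂ g₁ hg₁G h hg₁s with h' | h'
        · exact hne h'
        · exact hsneg₁ h'.symm
    have hsum1 : ∑ g ∈ up y, ∑ s ∈ sc g, m s =
        ∑ g' ∈ G.filter (fun g' => treeLE ρ y g' ∧ g' ≠ y), m g' := by
      rw [← hbiU, Finset.sum_biUnion hdisj]
    have hsum2 : ∑ g ∈ up y, m g =
        m y + ∑ g' ∈ G.filter (fun g' => treeLE ρ y g' ∧ g' ≠ y), m g' := by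
      have hins : up y = insert y (G.filter (fun g' => treeLE ρ y g' ∧ g' ≠ y)) := by
        ext g
        simp only [mem_up, Finset.mem_insert, Finset.mem_filter]
        constructor
        · rintro ⟨hgG, hyg⟩
          by_cases h : g = y
          · left; exact h
          · right; exact ⟨hgG, hyg, h⟩
        · rintro (h | ⟨hgG, hyg, _⟩)
          · rw [h]; exact ⟨hy, treeLE_refl ρ y⟩
          · exact ⟨hgG, hyg⟩
      rw [hins, Finset.sum_insert (by
        rw [Finset.mem_filter]
        rintro ⟨-, -, h⟩
        exact h rfl)]
    rw [hν]
    dsimp only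
    rw [Finset.sum_sub_distrib, hsum1, hsum2]
    ring
  -- the W identity
  have wId : ∀ i ∈ F, ∑ g ∈ Wi i, ν g = m (b i) - ∑ d ∈ D i, m d := by
    intro i hi
    have hsplit : up (b i) = Wi i ∪ (D i).biUnion (fun d => up d) := by
      ext g
      simp only [mem_up, Finset.mem_union, mem_Wi, Finset.mem_biUnion]
      constructor
      · rintro ⟨hgG, hbg⟩
        by_cases hd : ∀ d ∈ D i, ¬ treeLE ρ d g
        · left; exact ⟨hgG, hbg, hd⟩
        · push_neg at hd
          obtain ⟨d, hdD, hdg⟩ := hd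
          right; exact ⟨d, hdD, hgG, hdg⟩
      · rintro (⟨hgG, hbg, _⟩ | ⟨d, hdD, hdg⟩)
        · exact ⟨hgG, hbg⟩
        · exact ⟨hdg.1, (hD1 i hi d hdD).trans hdg.2⟩
    have hdisj2 : Disjoint (Wi i) ((D i).biUnion fun d => up d) := by
      rw [Finset.disjoint_left]
      intro g hgW hgB
      obtain ⟨-, -, hnd⟩ := (mem_Wi i g).mp hgW
      obtain ⟨d, hdD, hdg⟩ := Finset.mem_biUnion.mp hgB
      exact hnd d hdD ((mem_up d g).mp hdg).2
    have hdisj3 : Set.PairwiseDisjoint ↑(D i) (fun d => up d) := by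
      intro d₁ hd₁ d₂ hd₂ hne
      simp only [Function.onFun]
      rw [Finset.disjoint_left]
      intro g hg₁ hg₂
      have h1 := ((mem_up d₁ g).mp hg₁).2
      have h2 := ((mem_up d₂ g).mp hg₂).2
      rcases treeLE.comparable hT h1 h2 with h | h
      · exact hD2 i hi d₁ (Finset.mem_coe.mp hd₁) d₂ (Finset.mem_coe.mp hd₂) hne h
      · exact hD2 i hi d₂ (Finset.mem_coe.mp hd₂) d₁ (Finset.mem_coe.mp hd₁) hne.symm h
    have htel := telescope (b i) (hbG i hi)
    rw [hsplit, Finset.sum_union hdisj2, Finset.sum_biUnion hdisj3] at htel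
    have htel2 : ∀ d ∈ D i, ∑ g ∈ up d, ν g = m d := fun d hd =>
      telescope d (hdG i hi d hd)
    rw [Finset.sum_congr rfl htel2] at htel
    linarith
  -- conclusion
  have hsub : up x₀ ⊆ F.biUnion Wi := by
    intro g hg
    obtain ⟨hgG, hxg⟩ := (mem_up x₀ g).mp hg
    obtain ⟨i, hiF, hbg, hnd⟩ := hcov g hgG hxg
    exact Finset.mem_biUnion.mpr ⟨i, hiF, (mem_Wi i g).mpr ⟨hgG, hbg, hnd⟩⟩
  calc m x₀ = ∑ g ∈ up x₀, ν g := (telescope x₀ hx₀G).symm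
    _ ≤ ∑ g ∈ F.biUnion Wi, ν g :=
        Finset.sum_le_sum_of_subset_of_nonneg hsub (fun g _ _ => ν_nonneg g)
    _ ≤ ∑ i ∈ F, ∑ g ∈ Wi i, ν g :=
        real_sum_biUnion_le ν F Wi (fun g _ => ν_nonneg g)
    _ = ∑ i ∈ F, (m (b i) - ∑ d ∈ D i, m d) := Finset.sum_congr rfl wId

end FinCover
section PreFn
open MeasureTheory
open scoped Classical
variable {T : Type*} [MetricSpace T]

/-- `(x, C)` represents the pre-ball `S`. -/
def IsRep (ρ x : T) (C : Finset T) (S : Set T) : Prop :=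
  (∀ c ∈ C, treeLE ρ x c ∧ c ≠ x) ∧
  (∀ c ∈ C, ∀ c' ∈ C, c ≠ c' → ¬ treeLE ρ c c') ∧
  S = subtreeAt ρ x \ ⋃ c ∈ (C : Finset T), subtreeAt ρ c

noncomputable def repMass (m : T → ℝ) (x : T) (C : Finset T) : ℝ := m x - ∑ c ∈ C, m c

noncomputable def preFn (ρ : T) (m : T → ℝ) : Set T → ENNReal := fun S =>
  if S = ∅ then 0 else ⨅ (p : {p : T × Finset T // IsRep ρ p.1 p.2 S}),
    ENNReal.ofReal (repMass m p.1.1 p.1.2)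

lemma preFn_def (ρ : T) (m : T → ℝ) (S : Set T) : preFn ρ m S =
    (if S = ∅ then 0 else ⨅ (p : {p : T × Finset T // IsRep ρ p.1 p.2 S}),
      ENNReal.ofReal (repMass m p.1.1 p.1.2)) := rfl

lemma preFn_empty (ρ : T) (m : T → ℝ) : preFn ρ m ∅ = 0 := by
  rw [preFn_def, if_pos rfl]

lemma preFn_le_of_rep {ρ x : T} {C : Finset T} {S : Set T} (m : T → ℝ)
    (h : IsRep ρ x C S) : preFn ρ m S ≤ ENNReal.ofReal (repMass m x C) := by
  by_cases hS : S = ∅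
  · rw [hS, preFn_empty]; exact zero_le
  · rw [preFn_def, if_neg hS]
    exact iInf_le (fun p : {p : T × Finset T // IsRep ρ p.1 p.2 S} =>
      ENNReal.ofReal (repMass m p.1.1 p.1.2)) ⟨(x, C), h⟩

lemma diff_eq_self_of_inter_empty {α : Type*} {s u : Set α} (h : s ∩ u = ∅) :
    s \ u = s := by
  ext z
  constructor
  · exact fun hz => hz.1
  · intro hz
    refine ⟨hz, fun hu => ?_⟩
    have hm : z ∈ s ∩ u := ⟨hz, hu⟩
    rw [h] at hm
    exact hm

lemma subtree_disjoint (hT : IsRTree T) {ρ u v : T}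
    (h1 : ¬ treeLE ρ u v) (h2 : ¬ treeLE ρ v u) :
    subtreeAt ρ u ∩ subtreeAt ρ v = ∅ := by
  ext w
  simp only [Set.mem_inter_iff, Set.mem_empty_iff_false, iff_false]
  rintro ⟨hu, hv⟩
  rcases treeLE.comparable hT hu hv with h | h
  · exact h1 h
  · exact h2 h

lemma repMass_nonneg (hT : IsRTree T) (ρ : T) (m : T → ℝ)
    (hnonneg : ∀ x, 0 ≤ m x)
    (hdec : ∀ x y, treeLE ρ x y → m y ≤ m x)
    (hplus : ∀ (x : T) (C : Finset T),
      (∀ y ∈ C, treeLE ρ x y ∧ y ≠ x) →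
      (∀ y ∈ C, ∀ z ∈ C, y ≠ z → dist y z = dist y x + dist x z) →
      ∑ y ∈ C, sSup (m '' {z | treeLE ρ x z ∧ treeLE ρ z y ∧ z ≠ x}) ≤ m x)
    {x : T} {C : Finset T} (h1 : ∀ c ∈ C, treeLE ρ x c)
    (h2 : ∀ c ∈ C, ∀ c' ∈ C, c ≠ c' → ¬ treeLE ρ c c') :
    0 ≤ repMass m x C := by
  have := cutset_sum hT ρ m hnonneg hdec hplus x C h1 h2
  rw [repMass]; linarith

/-- Carathéodory splitting along a subtree. -/
lemma preFn_split (hT : IsRTree T) (ρ : T) (m : T → ℝ)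
    (hnonneg : ∀ x, 0 ≤ m x)
    (hdec : ∀ x y, treeLE ρ x y → m y ≤ m x)
    (hplus : ∀ (x : T) (C : Finset T),
      (∀ y ∈ C, treeLE ρ x y ∧ y ≠ x) →
      (∀ y ∈ C, ∀ z ∈ C, y ≠ z → dist y z = dist y x + dist x z) →
      ∑ y ∈ C, sSup (m '' {z | treeLE ρ x z ∧ treeLE ρ z y ∧ z ≠ x}) ≤ m x)
    (y : T) (t : Set T) :
    preFn ρ m (t ∩ subtreeAt ρ y) + preFn ρ m (t \ subtreeAt ρ y) ≤ preFn ρ m t := by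
  classical
  by_cases ht : t = ∅
  · rw [ht, Set.empty_inter, Set.empty_diff, preFn_empty, add_zero]
  conv_rhs => rw [preFn_def, if_neg ht]
  refine le_iInf ?_
  rintro ⟨⟨x, C⟩, hC1, hC2, hSet⟩
  dsimp only at hC1 hC2 hSet ⊢
  by_cases hyx : treeLE ρ y x
  · -- t ⊆ T_y
    have hsub : t ⊆ subtreeAt ρ y := by
      rw [hSet]
      exact fun z hz => hyx.trans hz.1
    rw [Set.inter_eq_left.mpr hsub, Set.diff_eq_empty.mpr hsub, preFn_empty, add_zero]
    exact preFn_le_of_rep m ⟨hC1, hC2, hSet⟩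
  by_cases hxy : treeLE ρ x y
  · -- x < y
    have hynex : y ≠ x := fun h => hyx (h ▸ treeLE_refl ρ y)
    by_cases hcy : ∃ c ∈ C, treeLE ρ c y
    · -- T_y is inside a removed subtree
      obtain ⟨c, hcC, hcy'⟩ := hcy
      have hint : t ∩ subtreeAt ρ y = ∅ := by
        rw [hSet]
        ext z
        simp only [Set.mem_inter_iff, Set.mem_diff, Set.mem_iUnion,
          Set.mem_empty_iff_false, iff_false]
        rintro ⟨⟨-, hnz⟩, hyz⟩
        exact hnz ⟨c, hcC, hcy'.trans hyz⟩
      have hdiff : t \ subtreeAt ρ y = t := diff_eq_self_of_inter_empty hint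
      rw [hint, hdiff, preFn_empty, zero_add]
      exact preFn_le_of_rep m ⟨hC1, hC2, hSet⟩
    · push_neg at hcy
      -- the generic splitting
      set C' : Finset T := C.filter (fun c => treeLE ρ y c) with hC'
      set C'' : Finset T := C.filter (fun c => ¬ treeLE ρ y c) with hC''
      have hyC'' : y ∉ C'' := by
        rw [hC'', Finset.mem_filter]
        rintro ⟨-, h⟩
        exact h (treeLE_refl ρ y)
      have rep1 : IsRep ρ y C' (t ∩ subtreeAt ρ y) := by
        refine ⟨?_, ?_, ?_⟩
        · intro c hc
          rw [hC', Finset.mem_filter] at hc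
          refine ⟨hc.2, fun h => hcy c hc.1 (h ▸ treeLE_refl ρ c)⟩
        · intro c hc c' hc' hne
          rw [hC', Finset.mem_filter] at hc hc'
          exact hC2 c hc.1 c' hc'.1 hne
        · ext z
          simp only [Set.mem_inter_iff, Set.mem_diff, Set.mem_iUnion, hSet]
          constructor
          · rintro ⟨⟨hxz, hnz⟩, hyz⟩
            refine ⟨hyz, ?_⟩
            rintro ⟨c, hc, hcz⟩
            exact hnz ⟨c, (Finset.mem_filter.mp hc).1, hcz⟩
          · rintro ⟨hyz, hnz⟩
            refine ⟨⟨hxy.trans hyz, ?_⟩, hyz⟩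
            rintro ⟨c, hcC, hcz⟩
            by_cases hyc : treeLE ρ y c
            · exact hnz ⟨c, Finset.mem_filter.mpr ⟨hcC, hyc⟩, hcz⟩
            · rcases treeLE.comparable hT hcz hyz with h | h
              · exact hcy c hcC h
              · exact hyc h
      have rep2 : IsRep ρ x (insert y C'') (t \ subtreeAt ρ y) := by
        refine ⟨?_, ?_, ?_⟩
        · intro c hc
          rcases Finset.mem_insert.mp hc with h | h
          · rw [h]; exact ⟨hxy, hynex⟩
          · exact hC1 c (Finset.mem_filter.mp h).1
        · intro c hc c' hc' hne
          rcases Finset.mem_insert.mp hc with h | h <;>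
            rcases Finset.mem_insert.mp hc' with h' | h'
          · exact absurd (h.trans h'.symm) hne
          · rw [h]
            exact fun hcon => (Finset.mem_filter.mp h').2 hcon
          · rw [h']
            exact fun hcon => hcy c (Finset.mem_filter.mp h).1 hcon
          · exact hC2 c (Finset.mem_filter.mp h).1 c' (Finset.mem_filter.mp h').1 hne
        · ext z
          simp only [Set.mem_diff, Set.mem_iUnion, hSet]
          constructor
          · rintro ⟨⟨hxz, hnz⟩, hyz⟩
            refine ⟨hxz, ?_⟩
            rintro ⟨c, hc, hcz⟩
            rcases Finset.mem_insert.mp hc with h | h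
            · exact hyz (h ▸ hcz)
            · exact hnz ⟨c, (Finset.mem_filter.mp h).1, hcz⟩
          · rintro ⟨hxz, hnz⟩
            have hyz : z ∉ subtreeAt ρ y := fun hyz =>
              hnz ⟨y, Finset.mem_insert_self _ _, hyz⟩
            refine ⟨⟨hxz, ?_⟩, hyz⟩
            rintro ⟨c, hcC, hcz⟩
            by_cases hyc : treeLE ρ y c
            · exact hyz (hyc.trans hcz)
            · exact hnz ⟨c, Finset.mem_insert_of_mem (Finset.mem_filter.mpr ⟨hcC, hyc⟩), hcz⟩
      have hm1 : 0 ≤ repMass m y C' :=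
        repMass_nonneg hT ρ m hnonneg hdec hplus
          (fun c hc => (rep1.1 c hc).1) rep1.2.1
      have hm2 : 0 ≤ repMass m x (insert y C'') :=
        repMass_nonneg hT ρ m hnonneg hdec hplus
          (fun c hc => (rep2.1 c hc).1) rep2.2.1
      have hmass : repMass m y C' + repMass m x (insert y C'') = repMass m x C := by
        rw [repMass, repMass, repMass, Finset.sum_insert hyC'']
        have := Finset.sum_filter_add_sum_filter_not C (fun c => treeLE ρ y c) m
        rw [hC', hC'']
        linarith [this]
      calc preFn ρ m (t ∩ subtreeAt ρ y) + preFn ρ m (t \ subtreeAt ρ y)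
          ≤ ENNReal.ofReal (repMass m y C') + ENNReal.ofReal (repMass m x (insert y C'')) :=
            add_le_add (preFn_le_of_rep m rep1) (preFn_le_of_rep m rep2)
        _ = ENNReal.ofReal (repMass m y C' + repMass m x (insert y C'')) :=
            (ENNReal.ofReal_add hm1 hm2).symm
        _ = ENNReal.ofReal (repMass m x C) := by rw [hmass]
  · -- incomparable: T_x ∩ T_y = ∅
    have hdisjxy := subtree_disjoint hT hxy hyx
    have hint : t ∩ subtreeAt ρ y = ∅ := by
      rw [hSet]
      ext z
      simp only [Set.mem_inter_iff, Set.mem_diff, Set.mem_empty_iff_false, iff_false]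
      rintro ⟨⟨hxz, -⟩, hyz⟩
      have hmem : z ∈ subtreeAt ρ x ∩ subtreeAt ρ y := ⟨hxz, hyz⟩
      rw [hdisjxy] at hmem
      exact hmem
    have hdiff : t \ subtreeAt ρ y = t := diff_eq_self_of_inter_empty hint
    rw [hint, hdiff, preFn_empty, zero_add]
    exact preFn_le_of_rep m ⟨hC1, hC2, hSet⟩

end PreFn
section Cover
open MeasureTheory
open scoped Classical
variable {T : Type*} [MetricSpace T]

lemma subtree_subset_strict {ρ x' x : T} (h : treeLE ρ x' x) (hne : x' ≠ x) :
    subtreeAt ρ x ⊆ subtreeAt ρ x' \ {x'} := by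
  intro z hz
  refine ⟨h.trans hz, fun hzx' => ?_⟩
  rw [Set.mem_singleton_iff] at hzx'
  exact hne (h.antisymm (hzx' ▸ hz))

lemma preFn_cover [CompactSpace T] (hT : IsRTree T) (ρ : T) (m : T → ℝ)
    (hnonneg : ∀ x, 0 ≤ m x)
    (hdec : ∀ x y, treeLE ρ x y → m y ≤ m x)
    (hleftcont : ∀ x, x ≠ ρ → m x = sInf (m '' {y | treeLE ρ y x ∧ y ≠ x}))
    (hplus : ∀ (x : T) (C : Finset T),
      (∀ y ∈ C, treeLE ρ x y ∧ y ≠ x) →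
      (∀ y ∈ C, ∀ z ∈ C, y ≠ z → dist y z = dist y x + dist x z) →
      ∑ y ∈ C, sSup (m '' {z | treeLE ρ x z ∧ treeLE ρ z y ∧ z ≠ x}) ≤ m x)
    (x₀ : T) (t : ℕ → Set T)
    (hcov : subtreeAt ρ x₀ ⊆ ⋃ n, t n) :
    ENNReal.ofReal (m x₀) ≤ ∑' n, preFn ρ m (t n) := by
  classical
  refine ENNReal.le_of_forall_pos_le_add fun ε hε hfin => ?_
  set δ : ℝ := (ε : ℝ) / 4 with hδ
  have hδpos : 0 < δ := by
    rw [hδ]; positivity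
  have hterm : ∀ n, preFn ρ m (t n) ≠ ⊤ := by
    intro n htop
    exact hfin.ne (top_le_iff.mp (htop ▸ ENNReal.le_tsum n))
  have key : ∀ n : ℕ, ∃ (p : T × Finset T) (U : Set T),
      (∀ c ∈ p.2, treeLE ρ p.1 c) ∧
      (∀ c ∈ p.2, ∀ c' ∈ p.2, c ≠ c' → ¬ treeLE ρ c c') ∧
      IsOpen U ∧ t n ⊆ U ∧
      (∀ z ∈ U, treeLE ρ p.1 z ∧ ∀ c ∈ p.2, ¬ treeLE ρ c z) ∧
      (t n = ∅ → U = ∅) ∧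
      (t n ≠ ∅ → ENNReal.ofReal (repMass m p.1 p.2) ≤
        preFn ρ m (t n) + 2 * ENNReal.ofReal (δ * (1/2) ^ n)) := by
    intro n
    by_cases hne : t n = ∅
    · exact ⟨(ρ, ∅), ∅, fun c hc => absurd hc (Finset.notMem_empty c),
        fun c hc => absurd hc (Finset.notMem_empty c), isOpen_empty,
        hne ▸ Set.Subset.rfl, fun z hz => absurd hz (Set.notMem_empty z),
        fun _ => rfl, fun h => absurd hne h⟩
    · have hofpos : ENNReal.ofReal (δ * (1/2)^n) ≠ 0 := by
        rw [Ne, ENNReal.ofReal_eq_zero, not_le]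
        positivity
      have h1 : preFn ρ m (t n) < preFn ρ m (t n) + ENNReal.ofReal (δ * (1/2)^n) :=
        ENNReal.lt_add_right (hterm n) hofpos
      conv_lhs at h1 => rw [preFn_def, if_neg hne]
      obtain ⟨⟨⟨x, C⟩, hrep⟩, hlt⟩ := iInf_lt_iff.mp h1
      obtain ⟨hr1, hr2, hr3⟩ := hrep
      dsimp only at hr1 hr2 hr3 hlt
      have htwo : preFn ρ m (t n) + ENNReal.ofReal (δ * (1/2)^n) ≤
          preFn ρ m (t n) + 2 * ENNReal.ofReal (δ * (1/2)^n) := by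
        refine add_le_add le_rfl ?_
        rw [two_mul]
        exact le_self_add
      have hclosed : IsClosed (⋃ c ∈ C, subtreeAt ρ c) :=
        Set.Finite.isClosed_biUnion C.finite_toSet (fun c _ => isClosed_subtreeAt ρ c)
      by_cases hxρ : x = ρ
      · refine ⟨(ρ, C), Set.univ \ ⋃ c ∈ C, subtreeAt ρ c, ?_, ?_, ?_, ?_, ?_, ?_, ?_⟩
        · intro c hc
          exact treeLE_root ρ c
        · exact fun c hc c' hc' hne' => hr2 c hc c' hc' hne'
        · exact IsOpen.sdiff isOpen_univ hclosed
        · rw [hr3, hxρ]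
          exact fun z hz => ⟨Set.mem_univ z, hz.2⟩
        · intro z hz
          exact ⟨treeLE_root ρ z, fun c hc hcz => hz.2 (Set.mem_biUnion hc hcz)⟩
        · exact fun h => absurd h hne
        · intro _
          have : repMass m ρ C = repMass m x C := by rw [hxρ]
          rw [this]
          exact le_trans hlt.le htwo
      · have hsne : (m '' {y | treeLE ρ y x ∧ y ≠ x}).Nonempty :=
          ⟨m ρ, ρ, ⟨treeLE_root ρ x, Ne.symm hxρ⟩, rfl⟩
        have hbdd : BddBelow (m '' {y | treeLE ρ y x ∧ y ≠ x}) := by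
          refine ⟨0, ?_⟩
          rintro v ⟨z, -, rfl⟩
          exact hnonneg z
        have hlt2 : sInf (m '' {y | treeLE ρ y x ∧ y ≠ x}) < m x + δ * (1/2)^n := by
          rw [← hleftcont x hxρ]
          have : (0:ℝ) < δ * (1/2)^n := by positivity
          linarith
        obtain ⟨v, ⟨x', hx's, rfl⟩, hvlt⟩ := (csInf_lt_iff hbdd hsne).mp hlt2
        refine ⟨(x', C), (subtreeAt ρ x' \ {x'}) \ ⋃ c ∈ C, subtreeAt ρ c,
          ?_, ?_, ?_, ?_, ?_, ?_, ?_⟩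
        · exact fun c hc => hx's.1.trans (hr1 c hc).1
        · exact hr2
        · exact IsOpen.sdiff (isOpen_strictSubtree hT ρ x') hclosed
        · rw [hr3]
          exact fun z hz => ⟨subtree_subset_strict hx's.1 hx's.2 hz.1, hz.2⟩
        · intro z hz
          exact ⟨hz.1.1, fun c hc hcz => hz.2 (Set.mem_biUnion hc hcz)⟩
        · exact fun h => absurd h hne
        · intro _
          have hmle : repMass m x' C ≤ repMass m x C + δ * (1/2)^n := by
            rw [repMass, repMass]
            linarith
          calc ENNReal.ofReal (repMass m x' C)
              ≤ ENNReal.ofReal (repMass m x C + δ * (1/2)^n) :=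
                ENNReal.ofReal_le_ofReal hmle
            _ ≤ ENNReal.ofReal (repMass m x C) + ENNReal.ofReal (δ * (1/2)^n) :=
                ENNReal.ofReal_add_le
            _ ≤ (preFn ρ m (t n) + ENNReal.ofReal (δ * (1/2)^n)) +
                ENNReal.ofReal (δ * (1/2)^n) := add_le_add hlt.le le_rfl
            _ ≤ preFn ρ m (t n) + 2 * ENNReal.ofReal (δ * (1/2)^n) := by
                rw [two_mul, ← add_assoc]
  choose p U hc1 hc2 hopen hsub hpt hemp hmassb using key
  have hcomp : IsCompact (subtreeAt ρ x₀) := (isClosed_subtreeAt ρ x₀).isCompact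
  obtain ⟨F, hF⟩ := hcomp.elim_finite_subcover U hopen
    (hcov.trans (Set.iUnion_mono fun n => hsub n))
  set F' : Finset ℕ := F.filter (fun n => t n ≠ ∅) with hF'
  have hcov' : ∀ y ∈ insert x₀ (F'.biUnion (fun i => insert ((p i).1) ((p i).2))),
      treeLE ρ x₀ y → ∃ i ∈ F', treeLE ρ ((p i).1) y ∧ ∀ d ∈ (p i).2, ¬ treeLE ρ d y := by
    intro y _ hxy
    have hyy : y ∈ ⋃ i ∈ F, U i := hF hxy
    rw [Set.mem_iUnion₂] at hyy
    obtain ⟨i, hiF, hyU⟩ := hyy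
    have hne : t i ≠ ∅ := by
      intro h
      rw [hemp i h] at hyU
      exact hyU
    exact ⟨i, Finset.mem_filter.mpr ⟨hiF, hne⟩, (hpt i y hyU).1, (hpt i y hyU).2⟩
  have hfc := fin_cover hT ρ m hnonneg hdec hplus F' (fun i => (p i).1)
    (fun i => (p i).2) x₀ (fun i _ => hc1 i) (fun i _ => hc2 i) hcov'
  have hsum0 : ENNReal.ofReal (m x₀) ≤
      ∑ i ∈ F', ENNReal.ofReal (repMass m (p i).1 (p i).2) := by
    rw [← ENNReal.ofReal_sum_of_nonneg (fun i _ =>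
      repMass_nonneg hT ρ m hnonneg hdec hplus (hc1 i) (hc2 i))]
    exact ENNReal.ofReal_le_ofReal hfc
  have hsum1 : ∑ i ∈ F', ENNReal.ofReal (repMass m (p i).1 (p i).2) ≤
      ∑ i ∈ F', (preFn ρ m (t i) + 2 * ENNReal.ofReal (δ * (1/2) ^ i)) :=
    Finset.sum_le_sum (fun i hi => hmassb i (Finset.mem_filter.mp hi).2)
  have hsum2 : ∑ i ∈ F', (preFn ρ m (t i) + 2 * ENNReal.ofReal (δ * (1/2) ^ i)) =
      ∑ i ∈ F', preFn ρ m (t i) + ∑ i ∈ F', 2 * ENNReal.ofReal (δ * (1/2) ^ i) :=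
    Finset.sum_add_distrib
  have hsum3 : ∑ i ∈ F', preFn ρ m (t i) ≤ ∑' n, preFn ρ m (t n) :=
    ENNReal.sum_le_tsum F'
  have hgeom : ∑' n : ℕ, ENNReal.ofReal (δ * (1/2) ^ n) = 2 * ENNReal.ofReal δ := by
    have h12 : ENNReal.ofReal ((1:ℝ)/2) = 2⁻¹ := by
      rw [show (1:ℝ)/2 = (2:ℝ)⁻¹ by norm_num,
        ENNReal.ofReal_inv_of_pos (by norm_num)]
      norm_num
    have heq : ∀ n : ℕ, ENNReal.ofReal (δ * (1/2) ^ n) =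
        ENNReal.ofReal δ * (2⁻¹ : ENNReal) ^ n := by
      intro n
      rw [ENNReal.ofReal_mul hδpos.le, ENNReal.ofReal_pow (by norm_num), h12]
    rw [tsum_congr heq, ENNReal.tsum_mul_left, ENNReal.tsum_geometric,
      ENNReal.one_sub_inv_two, inv_inv, mul_comm]
  have hsum4 : ∑ i ∈ F', 2 * ENNReal.ofReal (δ * (1/2) ^ i) ≤
      2 * (2 * ENNReal.ofReal δ) := by
    rw [← Finset.mul_sum, ← hgeom]
    exact mul_le_mul_right (ENNReal.sum_le_tsum F') 2
  have hfinal : 2 * (2 * ENNReal.ofReal δ) = (ε : ENNReal) := by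
    rw [← mul_assoc]
    norm_num
    rw [show ((4:ENNReal)) = ENNReal.ofReal (4:ℝ) by norm_num,
      ← ENNReal.ofReal_mul (by norm_num)]
    rw [hδ]
    rw [show (4:ℝ) * ((ε:ℝ)/4) = (ε:ℝ) by ring]
    exact ENNReal.ofReal_coe_nnreal
  calc ENNReal.ofReal (m x₀)
      ≤ ∑ i ∈ F', ENNReal.ofReal (repMass m (p i).1 (p i).2) := hsum0
    _ ≤ ∑ i ∈ F', (preFn ρ m (t i) + 2 * ENNReal.ofReal (δ * (1/2) ^ i)) := hsum1
    _ = ∑ i ∈ F', preFn ρ m (t i) + ∑ i ∈ F', 2 * ENNReal.ofReal (δ * (1/2) ^ i) := hsum2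
    _ ≤ (∑' n, preFn ρ m (t n)) + 2 * (2 * ENNReal.ofReal δ) := add_le_add hsum3 hsum4
    _ = (∑' n, preFn ρ m (t n)) + ε := by rw [hfinal]

end Cover
section Borel
open MeasureTheory MeasurableSpace
variable {T : Type*} [MetricSpace T]

def subtreeFamily (ρ : T) : Set (Set T) := {S | ∃ x, S = subtreeAt ρ x}

lemma measurableSet_subtree (ρ x : T) :
    MeasurableSet[MeasurableSpace.generateFrom (subtreeFamily ρ)] (subtreeAt ρ x) :=
  measurableSet_generateFrom ⟨x, rfl⟩

/-- The sets `{z ≥ q : dist q z > t}` are generated by subtrees. -/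
lemma measurable_gt (hT : IsRTree T) (ρ q : T) (tt : ℝ)
    (D : Set T) (hDc : D.Countable) (hD : Dense D) :
    MeasurableSet[MeasurableSpace.generateFrom (subtreeFamily ρ)]
      {z | treeLE ρ q z ∧ tt < dist q z} := by
  classical
  by_cases htneg : tt < 0
  · have h : {z | treeLE ρ q z ∧ tt < dist q z} = subtreeAt ρ q := by
      ext z
      exact ⟨fun h => h.1, fun h => ⟨h, lt_of_lt_of_le htneg dist_nonneg⟩⟩
    rw [h]; exact measurableSet_subtree ρ q
  push_neg at htneg
  set W : Set T := ⋃ z' ∈ D, ⋃ q' : ℚ, {w | tt < (q' : ℝ) ∧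
    ∃ (h : (q' : ℝ) ∈ Set.Icc (0:ℝ) (dist q z')),
      w = segMap hT q z' ⟨(q' : ℝ), h⟩ ∧ treeLE ρ q w} with hW
  have hWc : W.Countable := by
    refine hDc.biUnion fun z' _ => Set.countable_iUnion fun q' => ?_
    refine Set.Subsingleton.countable ?_
    rintro w ⟨-, h1, hw1, -⟩ w' ⟨-, h1', hw1', -⟩
    rw [hw1, hw1']
  have hset : {z | treeLE ρ q z ∧ tt < dist q z} = ⋃ w ∈ W, subtreeAt ρ w := by
    ext z
    simp only [Set.mem_setOf_eq, Set.mem_iUnion]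
    constructor
    · rintro ⟨hqz, htz⟩
      have hr : 0 < (dist q z - tt) / 2 := by linarith
      obtain ⟨z', hzb, hz'D⟩ := Metric.dense_iff.mp hD z ((dist q z - tt)/2) hr
      have hdist : dist z z' < (dist q z - tt)/2 := by
        rw [dist_comm]
        exact Metric.mem_ball.mp hzb
      obtain ⟨s, hs0, hs1, hs2, hsd, hagree⟩ := exists_divergence hT q z z'
      have hslb : tt < s := by
        have tri : dist q z ≤ dist q z' + dist z' z := dist_triangle _ _ _
        have hcm : dist z z' = dist z' z := dist_comm _ _
        linarith
      obtain ⟨q', hq'1, hq'2⟩ := exists_rat_btwn hslb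
      have hq'm2 : (q' : ℝ) ∈ Set.Icc (0:ℝ) (dist q z') :=
        ⟨le_of_lt (lt_of_le_of_lt htneg hq'1), by linarith⟩
      have hq'm1 : (q' : ℝ) ∈ Set.Icc (0:ℝ) (dist q z) :=
        ⟨le_of_lt (lt_of_le_of_lt htneg hq'1), by linarith⟩
      set w := segMap hT q z' ⟨(q' : ℝ), hq'm2⟩ with hwdef
      have hweq : segMap hT q z ⟨(q' : ℝ), hq'm1⟩ = w :=
        hagree (q' : ℝ) hq'm1 hq'm2 hq'2.le
      have hprop := treeLE_of_seg hT hqz hq'm1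
      refine ⟨w, ?_, ?_⟩
      · refine Set.mem_biUnion hz'D ?_
        refine Set.mem_iUnion.mpr ⟨q', hq'1, hq'm2, rfl, ?_⟩
        rw [← hweq]
        exact hprop.1
      · rw [← hweq]
        exact hprop.2.1
    · rintro ⟨w, hwW, hzw⟩
      rw [hW] at hwW
      simp only [Set.mem_iUnion] at hwW
      obtain ⟨z', hz'D, q', hq'lt, hmem, hwdef, hqw⟩ := hwW
      have hdqw : dist q w = (q' : ℝ) := by
        rw [hwdef]
        exact (segMap_spec hT q z').dist_left _
      refine ⟨hqw.trans hzw, ?_⟩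
      have h1 : dist q w = dist ρ w - dist ρ q := hqw.dist_eq
      have h2 : dist q z = dist ρ z - dist ρ q := (hqw.trans hzw).dist_eq
      have h3 : dist ρ w ≤ dist ρ z := hzw.height_le
      linarith
  rw [hset]
  exact MeasurableSet.biUnion hWc fun w _ => measurableSet_subtree ρ w

/-- The sets `{z ≥ q : dist q z < s}` are generated by subtrees. -/
lemma measurable_lt_subtree (hT : IsRTree T) (ρ q : T) (s : ℝ)
    (D : Set T) (hDc : D.Countable) (hD : Dense D) :
    MeasurableSet[MeasurableSpace.generateFrom (subtreeFamily ρ)]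
      {z | treeLE ρ q z ∧ dist q z < s} := by
  have hset : {z | treeLE ρ q z ∧ dist q z < s} =
      subtreeAt ρ q \ ⋂ n : ℕ, {z | treeLE ρ q z ∧ s - 1/(n+1) < dist q z} := by
    ext z
    simp only [Set.mem_setOf_eq, Set.mem_diff, Set.mem_iInter]
    constructor
    · rintro ⟨hqz, hlt⟩
      refine ⟨hqz, fun hall => ?_⟩
      obtain ⟨n, hn⟩ := exists_nat_one_div_lt (show 0 < s - dist q z by linarith)
      have := (hall n).2
      have hcast : 1/((n:ℝ)+1) = 1/(n+1) := by norm_num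
      linarith [hn]
    · rintro ⟨hqz, hnall⟩
      refine ⟨hqz, ?_⟩
      by_contra hge
      push_neg at hge
      refine hnall fun n => ⟨hqz, ?_⟩
      have h1 : (0:ℝ) < 1/(n+1) := by positivity
      linarith
  rw [hset]
  refine MeasurableSet.diff (measurableSet_subtree ρ q) ?_
  exact MeasurableSet.iInter fun n => measurable_gt hT ρ q _ D hDc hD

/-- Metric balls are generated by subtrees. -/
lemma measurable_ball (hT : IsRTree T) (ρ w : T) (r : ℝ)
    (D : Set T) (hDc : D.Countable) (hD : Dense D) :
    MeasurableSet[MeasurableSpace.generateFrom (subtreeFamily ρ)] (Metric.ball w r) := by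
  classical
  set Q : Set T := ⋃ t : ℚ, {u | ∃ (h : (t:ℝ) ∈ Set.Icc (0:ℝ) (dist ρ w)),
    u = segMap hT ρ w ⟨(t:ℝ), h⟩} with hQ
  have hQc : Q.Countable := by
    refine Set.countable_iUnion fun t => Set.Subsingleton.countable ?_
    rintro u ⟨h1, hu⟩ u' ⟨h1', hu'⟩
    rw [hu, hu']
  have hset : Metric.ball w r = ⋃ q ∈ Q, {z | treeLE ρ q z ∧ dist q z < r - dist w q} := by
    ext z
    simp only [Metric.mem_ball, Set.mem_iUnion]
    constructor
    · intro hz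
      obtain ⟨s, hs0, hs1, hs2, hsd, hagree⟩ := exists_divergence hT ρ w z
      have hdzw : dist z w = dist w z := dist_comm _ _
      rcases eq_or_lt_of_le hs0 with hseq | hspos
      · -- s = 0 : take q = ρ
        have hm : ((0:ℚ):ℝ) ∈ Set.Icc (0:ℝ) (dist ρ w) := by
          constructor <;> simp [dist_nonneg]
        refine ⟨ρ, ?_, treeLE_root ρ z, ?_⟩
        · refine Set.mem_iUnion.mpr ⟨0, hm, ?_⟩
          exact ((segMap_spec hT ρ w).2.1).symm.trans
            (congrArg _ (Subtype.ext (by norm_num)))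
        · have : dist ρ z = dist ρ z - s := by rw [← hseq]; ring
          have hwρ : dist w ρ = dist ρ w := dist_comm _ _
          linarith
      · -- s > 0
        set δ : ℝ := min ((r - dist z w)/2) s with hδ
        have hδpos : 0 < δ := by
          rw [hδ]
          exact lt_min (by linarith) hspos
        obtain ⟨t, ht1, ht2⟩ := exists_rat_btwn (show s - δ < s by linarith)
        have htpos : 0 ≤ (t:ℝ) := by
          have : s - δ ≥ 0 := by
            rw [hδ]
            have := min_le_right ((r - dist z w)/2) s
            linarith
          linarith
        have htm1 : (t:ℝ) ∈ Set.Icc (0:ℝ) (dist ρ w) := ⟨htpos, by linarith⟩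
        have htm2 : (t:ℝ) ∈ Set.Icc (0:ℝ) (dist ρ z) := ⟨htpos, by linarith⟩
        set q := segMap hT ρ w ⟨(t:ℝ), htm1⟩ with hqdef
        have hqz : segMap hT ρ z ⟨(t:ℝ), htm2⟩ = q := (hagree (t:ℝ) htm1 htm2 ht2.le).symm
        have hq1 := treeLE_of_seg hT (treeLE_root ρ w) htm1
        have hq2 := treeLE_of_seg hT (treeLE_root ρ z) htm2
        rw [hqz] at hq2
        refine ⟨q, Set.mem_iUnion.mpr ⟨t, htm1, rfl⟩, hq2.2.1, ?_⟩
        have e1 : dist q z = dist ρ z - dist ρ q := hq2.2.1.dist_eq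
        have e2 : dist q w = dist ρ w - dist ρ q := hq1.2.1.dist_eq
        have e3 : dist ρ q = (t : ℝ) := by
          rw [hqdef]
          exact ((segMap_spec hT ρ w).dist_left _)
        have e4 : dist w q = dist q w := dist_comm _ _
        have hd : s - δ < (t:ℝ) := ht1
        have hδle : δ ≤ (r - dist z w)/2 := min_le_left _ _
        linarith
    · rintro ⟨q, hqQ, hqz, hlt⟩
      have tri : dist z w ≤ dist z q + dist q w := dist_triangle _ _ _
      have hcm1 : dist z q = dist q z := dist_comm _ _
      have hcm2 : dist q w = dist w q := dist_comm _ _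
      linarith
  rw [hset]
  exact MeasurableSet.biUnion hQc fun q _ => measurable_lt_subtree hT ρ q _ D hDc hD

end Borel
section BorelEq
open MeasureTheory MeasurableSpace
variable {T : Type*} [MetricSpace T]

lemma measurable_open (hT : IsRTree T) [CompactSpace T] (ρ : T) {U : Set T}
    (hU : IsOpen U) :
    MeasurableSet[MeasurableSpace.generateFrom (subtreeFamily ρ)] U := by
  classical
  haveI hsep : TopologicalSpace.SeparableSpace T :=
    TopologicalSpace.isSeparable_univ_iff.mp isCompact_univ.isSeparable
  obtain ⟨D, hDc, hD⟩ := TopologicalSpace.exists_countable_dense T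
  have hset : U = ⋃ w ∈ D, ⋃ s : ℚ, ⋃ (_ : Metric.ball w (s:ℝ) ⊆ U),
      Metric.ball w (s:ℝ) := by
    ext z
    simp only [Set.mem_iUnion]
    constructor
    · intro hz
      obtain ⟨r, hr, hball⟩ := Metric.isOpen_iff.mp hU z hz
      obtain ⟨w, hwb, hwD⟩ := Metric.dense_iff.mp hD z (r/4) (by linarith)
      have hdwz : dist w z < r/4 := Metric.mem_ball.mp hwb
      obtain ⟨sq, hs1, hs2⟩ := exists_rat_btwn (show r/4 < r/2 by linarith)
      refine ⟨w, hwD, sq, ?_, ?_⟩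
      · intro y hy
        rw [Metric.mem_ball] at hy
        apply hball
        rw [Metric.mem_ball]
        calc dist y z ≤ dist y w + dist w z := dist_triangle _ _ _
          _ < (sq:ℝ) + r/4 := by linarith
          _ < r := by linarith
      · rw [Metric.mem_ball, dist_comm]
        linarith
    · rintro ⟨w, hwD, s, hsub, hz⟩
      exact hsub hz
  rw [hset]
  exact MeasurableSet.biUnion hDc fun w _ => MeasurableSet.iUnion fun s =>
    MeasurableSet.iUnion fun _ => measurable_ball hT ρ w s D hDc hD

lemma generateFrom_subtreeFamily [CompactSpace T] [MeasurableSpace T] [BorelSpace T]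
    (hT : IsRTree T) (ρ : T) :
    MeasurableSpace.generateFrom (subtreeFamily ρ) = ‹MeasurableSpace T› := by
  refine le_antisymm ?_ ?_
  · refine generateFrom_le ?_
    rintro S ⟨x, rfl⟩
    exact (isClosed_subtreeAt ρ x).measurableSet
  · rw [BorelSpace.measurable_eq (α := T)]
    exact generateFrom_le fun U hU => measurable_open hT ρ hU

end BorelEq

/-- Proposition 2.4 of the paper: if `m` is a decreasing, left-continuous,
nonnegative function on a compact rooted `ℝ`-tree with `m(x) ≥ m(x⁺)` for all
`x`, then there is a unique Borel measure `μ` on the tree with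
`μ(T_x) = m(x)` for every `x`. -/
theorem stmt15 (T : Type*) [MetricSpace T] [CompactSpace T]
    [MeasurableSpace T] [BorelSpace T]
    (hT : IsRTree T) (ρ : T) (m : T → ℝ)
    (hnonneg : ∀ x, 0 ≤ m x)
    (hdec : ∀ x y, treeLE ρ x y → m y ≤ m x)
    (hleftcont : ∀ x, x ≠ ρ → m x = sInf (m '' {y | treeLE ρ y x ∧ y ≠ x}))
    (hplus : ∀ (x : T) (C : Finset T),
      (∀ y ∈ C, treeLE ρ x y ∧ y ≠ x) →
      (∀ y ∈ C, ∀ z ∈ C, y ≠ z → dist y z = dist y x + dist x z) →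
      ∑ y ∈ C, sSup (m '' {z | treeLE ρ x z ∧ treeLE ρ z y ∧ z ≠ x}) ≤ m x) :
    ∃! μ : MeasureTheory.Measure T,
      ∀ x : T, μ (subtreeAt ρ x) = ENNReal.ofReal (m x) := by
  classical
  have hfe : preFn ρ m ∅ = 0 := preFn_empty ρ m
  set μstar := MeasureTheory.OuterMeasure.ofFunction (preFn ρ m) hfe with hμstar
  have hsub_carath : ∀ y : T, @MeasurableSet T μstar.caratheodory (subtreeAt ρ y) := by
    intro y
    exact MeasureTheory.OuterMeasure.ofFunction_caratheodory
      (fun t => preFn_split hT ρ m hnonneg hdec hplus y t)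
  have hle : ‹MeasurableSpace T› ≤ μstar.caratheodory := by
    rw [← generateFrom_subtreeFamily hT ρ]
    refine MeasurableSpace.generateFrom_le ?_
    rintro S ⟨x, rfl⟩
    exact hsub_carath x
  set μ := μstar.toMeasure hle with hμ
  have hval : ∀ x : T, μ (subtreeAt ρ x) = ENNReal.ofReal (m x) := by
    intro x
    rw [hμ, MeasureTheory.toMeasure_apply _ _
      ((isClosed_subtreeAt ρ x).measurableSet)]
    refine le_antisymm ?_ ?_
    · refine le_trans (MeasureTheory.OuterMeasure.ofFunction_le _) ?_
      have hrep : IsRep ρ x ∅ (subtreeAt ρ x) := by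
        refine ⟨fun c hc => absurd hc (Finset.notMem_empty c),
          fun c hc => absurd hc (Finset.notMem_empty c), ?_⟩
        simp
      calc preFn ρ m (subtreeAt ρ x) ≤ ENNReal.ofReal (repMass m x ∅) :=
          preFn_le_of_rep m hrep
        _ = ENNReal.ofReal (m x) := by rw [repMass, Finset.sum_empty, sub_zero]
    · rw [hμstar, MeasureTheory.OuterMeasure.ofFunction_apply]
      refine le_iInf fun t => le_iInf fun hcov => ?_
      exact preFn_cover hT ρ m hnonneg hdec hleftcont hplus x t hcov
  refine ⟨μ, hval, ?_⟩
  intro ν hν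
  have huniv : (Set.univ : Set T) = subtreeAt ρ ρ := subtreeAt_root.symm
  haveI hνfin : MeasureTheory.IsFiniteMeasure ν := by
    constructor
    rw [huniv, hν ρ]
    exact ENNReal.ofReal_lt_top
  have hpi : IsPiSystem (subtreeFamily ρ) := by
    rintro S ⟨x, rfl⟩ S' ⟨y, rfl⟩ hne
    obtain ⟨w, hwx, hwy⟩ := hne
    rcases treeLE.comparable hT hwx hwy with h | h
    · refine ⟨y, ?_⟩
      ext z
      exact ⟨fun hz => hz.2, fun hz => ⟨h.trans hz, hz⟩⟩
    · refine ⟨x, ?_⟩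
      ext z
      exact ⟨fun hz => hz.1, fun hz => ⟨hz, h.trans hz⟩⟩
  refine MeasureTheory.ext_of_generate_finite (subtreeFamily ρ)
    (generateFrom_subtreeFamily hT ρ).symm hpi ?_ ?_
  · rintro S ⟨x, rfl⟩
    rw [hν x, hval x]
  · rw [huniv, hν ρ, hval ρ]
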